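/- arXiv:2502.07135 — 8 statements merged into one kernel-verified Lean document; each statement's English description precedes it below -/
import Mathlib

section
/- Let k ≥ 4 be an even integer, let d ≥ k²/2 be an integer, and let n ≥ k be a multiple of k/2. Then there exists a formula Φ ∈ Φ_{n,k,d} such that the all-TRUE assignment σ⁺ satisfies Φ and, for every real β ≥ k·ln 2, the weighted k-SAT distribution satisfies Pr_{Φ,β}[σ = σ⁺] ≥ 1/(1 + 2^{-n}). (Symmetrically, there exists Φ' ∈ Φ_{n,k,d} such that the all-FALSE assignment carries probability at least 1/(1+2^{-n}) under Pr_{Φ',β} for every β ≤ -k·ln 2.) -/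
open Real Finset

attribute [local instance] Classical.propDecidable

abbrev Assignment (n : ℕ) := Fin n → Bool
abbrev Clause (n : ℕ) := Fin n → Option Bool
abbrev Cnf (n : ℕ) := List (Clause n)

/-- A clause is satisfied if it contains a true literal. -/
def clauseSat {n : ℕ} (σ : Assignment n) (c : Clause n) : Prop :=
  ∃ i : Fin n, c i = some (σ i)

/-- An assignment satisfies a CNF formula if every clause contains a true literal. -/
def satCnf {n : ℕ} (σ : Assignment n) (Φ : Cnf n) : Prop :=
  ∀ c ∈ Φ, clauseSat σ c

/-- The set of variables appearing (negated or not) in a clause. -/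
noncomputable def clauseVars {n : ℕ} (c : Clause n) : Finset (Fin n) :=
  Finset.univ.filter (fun i => (c i).isSome)

/-- The number of clauses of `Φ` in which variable `i` appears (negated or not). -/
noncomputable def degree {n : ℕ} (Φ : Cnf n) (i : Fin n) : ℕ :=
  (Φ.filter (fun c => (c i).isSome)).length

/-- `Φ ∈ Φ_{n,k,d}`: every clause has exactly `k` distinct variables and every
variable appears in at most `d` clauses. -/
def memPhi (n k d : ℕ) (Φ : Cnf n) : Prop :=
  (∀ c ∈ Φ, (clauseVars c).card = k) ∧ ∀ i : Fin n, degree Φ i ≤ d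

/-- The number of variables assigned TRUE. -/
noncomputable def mTrue {n : ℕ} (σ : Assignment n) : ℕ :=
  (Finset.univ.filter (fun i => σ i = true)).card

/-- The number of variables assigned FALSE. -/
noncomputable def nFalse {n : ℕ} (σ : Assignment n) : ℕ :=
  (Finset.univ.filter (fun i => σ i = false)).card

/-- The (unnormalised) weight `e^{β·m(σ)}·𝟙[σ ⊨ Φ]`. -/
noncomputable def weight {n : ℕ} (β : ℝ) (Φ : Cnf n) (σ : Assignment n) : ℝ :=
  if satCnf σ Φ then Real.exp (β * mTrue σ) else 0

/-- The partition function. -/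
noncomputable def Zfun {n : ℕ} (β : ℝ) (Φ : Cnf n) : ℝ :=
  ∑ τ : Assignment n, weight β Φ τ

/-- The weighted k-SAT probability of a single assignment. -/
noncomputable def prob {n : ℕ} (β : ℝ) (Φ : Cnf n) (σ : Assignment n) : ℝ :=
  weight β Φ σ / Zfun β Φ

/-- The weighted k-SAT probability of an event. -/
noncomputable def probEvent {n : ℕ} (β : ℝ) (Φ : Cnf n) (E : Assignment n → Prop) : ℝ :=
  (∑ τ : Assignment n, if E τ then weight β Φ τ else 0) / Zfun β Φ

namespace S0
def posF (n : ℕ) (hn : 0 < n) (a : ℕ) : Fin n := ⟨a % n, Nat.mod_lt a hn⟩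

lemma posF_eq_iff (n : ℕ) (hn : 0 < n) {a b : ℕ} :
    posF n hn a = posF n hn b ↔ a % n = b % n := by
  simp [posF, Fin.ext_iff]

lemma posF_add_n (n : ℕ) (hn : 0 < n) (a : ℕ) : posF n hn (a + n) = posF n hn a := by
  simp [posF_eq_iff, Nat.add_mod_right]

lemma posF_val (n : ℕ) (hn : 0 < n) (x : Fin n) : posF n hn x.val = x := by
  simp [posF, Fin.ext_iff, Nat.mod_eq_of_lt x.isLt]

section
variable (n : ℕ) (hn : 0 < n) (σ : Fin n → Bool)

/-- `σ` read as an `n`-periodic function on `ℕ`. -/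
def sp (a : ℕ) : Bool := σ (posF n hn a)

lemma sp_add_n (a : ℕ) : sp n hn σ (a + n) = sp n hn σ a := by
  simp [sp, posF_add_n]

lemma sp_congr {a b : ℕ} (h : a % n = b % n) : sp n hn σ a = sp n hn σ b := by
  simp only [sp]
  rw [(posF_eq_iff n hn).2 h]

/-- distance to the next FALSE position (junk value 0 if none). -/
noncomputable def gap (a : ℕ) : ℕ :=
  if h : ∃ d, 0 < d ∧ sp n hn σ (a + d) = false then Nat.find h else 0

variable {n hn σ}

lemma gap_spec {a : ℕ} (ha : sp n hn σ a = false) :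
    0 < gap n hn σ a ∧ sp n hn σ (a + gap n hn σ a) = false := by
  have h : ∃ d, 0 < d ∧ sp n hn σ (a + d) = false := ⟨n, hn, by rw [sp_add_n]; exact ha⟩
  rw [gap, dif_pos h]
  exact Nat.find_spec h

lemma gap_le {a d : ℕ} (hd : 0 < d) (hfa : sp n hn σ (a + d) = false) :
    gap n hn σ a ≤ d := by
  have h : ∃ d, 0 < d ∧ sp n hn σ (a + d) = false := ⟨d, hd, hfa⟩
  rw [gap, dif_pos h]
  exact Nat.find_le ⟨hd, hfa⟩

lemma gap_le_n {a : ℕ} (ha : sp n hn σ a = false) : gap n hn σ a ≤ n :=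
  gap_le hn (by rw [sp_add_n]; exact ha)

lemma gap_min {a t : ℕ} (ha : sp n hn σ a = false) (h1 : 0 < t) (h2 : t < gap n hn σ a) :
    sp n hn σ (a + t) = true := by
  have h : ∃ d, 0 < d ∧ sp n hn σ (a + d) = false := ⟨n, hn, by rw [sp_add_n]; exact ha⟩
  rw [gap, dif_pos h] at h2
  have := Nat.find_min h h2
  simp only [not_and] at this
  simpa using this h1

lemma gap_congr {a b : ℕ} (h : a % n = b % n) (ha : sp n hn σ a = false) :
    gap n hn σ a = gap n hn σ b := by
  have hb : sp n hn σ b = false := by rw [← sp_congr n hn σ h]; exact ha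
  have key : ∀ {u v : ℕ}, u % n = v % n → sp n hn σ u = false → sp n hn σ v = false →
      gap n hn σ u ≤ gap n hn σ v := by
    intro u v huv hu hv
    refine gap_le (gap_spec hv).1 ?_
    rw [sp_congr n hn σ (Nat.ModEq.add_right _ huv)]
    exact (gap_spec hv).2
  exact le_antisymm (key h ha hb) (key h.symm hb ha)

/-- the "previous false" uniqueness lemma. -/
lemma false_uniq {a b : ℕ} (ha : sp n hn σ a = false) (hb : sp n hn σ b = false)
    (h1 : a ≤ b) (h2 : b < a + gap n hn σ a) : b = a := by
  by_contra hne
  have h3 : 0 < b - a := by omega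
  have := gap_min ha h3 (by omega)
  rw [show a + (b - a) = b by omega, hb] at this
  exact Bool.false_ne_true this
end
end S0
namespace S0
section
variable (n : ℕ) (hn : 0 < n) (σ : Fin n → Bool)

lemma Bk_exists (hne : ∃ y : Fin n, σ y = false) (p : Fin n) :
    ∃ s, s ≤ n - 1 ∧ sp n hn σ ((p : ℕ) + n - s) = false := by
  obtain ⟨y, hy⟩ := hne
  have hlt : (y : ℕ) < n := y.isLt
  refine ⟨((p : ℕ) + n - (y : ℕ)) % n, by have := Nat.mod_lt ((p:ℕ) + n - (y:ℕ)) hn; omega, ?_⟩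
  set s := ((p : ℕ) + n - (y : ℕ)) % n with hs
  have hsn : s < n := Nat.mod_lt _ hn
  have e1 : Nat.ModEq n s ((p:ℕ) + n - (y:ℕ)) := Nat.mod_modEq _ n
  have e2 : ((p:ℕ) + n - s) + s = (y:ℕ) + ((p:ℕ) + n - (y:ℕ)) := by omega
  have e3 : Nat.ModEq n (((p:ℕ) + n - s) + s) ((y:ℕ) + ((p:ℕ) + n - (y:ℕ))) := by rw [e2]
  have hcong : Nat.ModEq n ((p:ℕ) + n - s) (y : ℕ) := Nat.ModEq.add_right_cancel e1 e3
  rw [sp_congr n hn σ hcong, sp, posF]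
  simpa [Nat.mod_eq_of_lt hlt] using hy

/-- backward distance to the nearest false (0 if `p` itself is false). -/
noncomputable def Bk (hne : ∃ y : Fin n, σ y = false) (p : Fin n) : ℕ :=
  Nat.find (Bk_exists n hn σ hne p)

variable {n hn σ}

lemma Bk_spec (hne : ∃ y : Fin n, σ y = false) (p : Fin n) :
    Bk n hn σ hne p ≤ n - 1 ∧ sp n hn σ ((p : ℕ) + n - Bk n hn σ hne p) = false :=
  Nat.find_spec (Bk_exists n hn σ hne p)

lemma Bk_min (hne : ∃ y : Fin n, σ y = false) (p : Fin n) {s : ℕ}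
    (h : s < Bk n hn σ hne p) : sp n hn σ ((p : ℕ) + n - s) = true := by
  have h2 := Nat.find_min (Bk_exists n hn σ hne p) h
  simp only [not_and] at h2
  have hs : s ≤ n - 1 := by have := (Bk_spec (hn:=hn) hne p).1; omega
  have := h2 hs
  simpa using this

variable (n hn σ)

/-- the previous false position, as an element of `Fin n`. -/
noncomputable def prevF (hne : ∃ y : Fin n, σ y = false) (p : Fin n) : Fin n :=
  posF n hn ((p : ℕ) + n - Bk n hn σ hne p)

variable {n hn σ}

lemma prevF_false (hne : ∃ y : Fin n, σ y = false) (p : Fin n) :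
    σ (prevF n hn σ hne p) = false := (Bk_spec hne p).2

end
end S0
namespace S0
section
variable {n : ℕ} {hn : 0 < n} {σ : Fin n → Bool}

lemma sp_val (x : Fin n) : sp n hn σ (x : ℕ) = σ x := by
  rw [sp, posF_val]

lemma fiber_eq (hne : ∃ y : Fin n, σ y = false) {x : Fin n} (hx : σ x = false) :
    Finset.univ.filter (fun p => prevF n hn σ hne p = x) =
      (Finset.range (gap n hn σ (x : ℕ))).image (fun t => posF n hn ((x : ℕ) + t)) := by
  have hxf : sp n hn σ (x : ℕ) = false := by rw [sp_val]; exact hx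
  have hgn : gap n hn σ (x : ℕ) ≤ n := gap_le_n hxf
  ext p
  simp only [Finset.mem_filter, Finset.mem_univ, true_and, Finset.mem_image, Finset.mem_range]
  constructor
  · intro hp
    set t := Bk n hn σ hne p with ht
    have htn : t ≤ n - 1 := (Bk_spec (hn := hn) hne p).1
    -- congruence : p ≡ x + t  [MOD n]
    have hq : ((p : ℕ) + n - t) % n = (x : ℕ) % n := by
      have : (prevF n hn σ hne p : ℕ) = (x : ℕ) := by rw [hp]
      simpa [prevF, posF, Nat.mod_eq_of_lt x.isLt] using this
    have hpx : ((p : ℕ) + n) % n = ((x : ℕ) + t) % n := by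
      have e2 : ((p:ℕ) + n - t) + t = (p:ℕ) + n := by omega
      calc ((p:ℕ) + n) % n = (((p:ℕ) + n - t) + t) % n := by rw [e2]
        _ = ((x:ℕ) + t) % n := Nat.ModEq.add_right t hq
    have hpx' : (p : ℕ) % n = ((x : ℕ) + t) % n := by
      rw [← Nat.add_mod_right (p : ℕ) n]; exact hpx
    have htg : t < gap n hn σ (x : ℕ) := by
      rcases Nat.eq_zero_or_pos t with h0 | hpos
      · have := (gap_spec hxf).1; omega
      · -- sp (x + u) = true for 1 ≤ u ≤ t
        have key : ∀ u, 1 ≤ u → u ≤ t → sp n hn σ ((x : ℕ) + u) = true := by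
          intro u h1 h2
          have hB : sp n hn σ ((p : ℕ) + n - (t - u)) = true := Bk_min hne p (by omega)
          have hcong : ((p : ℕ) + n - (t - u)) % n = ((x : ℕ) + u) % n := by
            have e3 : ((p:ℕ) + n - (t - u)) + (t - u) = (p:ℕ) + n := by omega
            have e4 : ((x:ℕ) + u) + (t - u) = (x:ℕ) + t := by omega
            have : (((p:ℕ) + n - (t - u)) + (t - u)) % n = (((x:ℕ) + u) + (t - u)) % n := by
              rw [e3, e4]; exact hpx
            exact Nat.ModEq.add_right_cancel' _ this
          rw [← sp_congr n hn σ hcong]; exact hB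
        by_contra hcon
        push_neg at hcon
        have h1 := (gap_spec hxf).1
        have := key _ h1 hcon
        rw [(gap_spec hxf).2] at this
        exact Bool.false_ne_true this
    refine ⟨t, htg, ?_⟩
    apply Fin.ext
    show ((x : ℕ) + t) % n = (p : ℕ)
    rw [← hpx', Nat.mod_eq_of_lt p.isLt]
  · rintro ⟨t, htg, rfl⟩
    set p := posF n hn ((x : ℕ) + t) with hp
    have hpmod : (p : ℕ) % n = ((x : ℕ) + t) % n := by
      simp [hp, posF, Nat.mod_mod_of_dvd]
    have hcongT : ∀ s ≤ t, ((p : ℕ) + n - s) % n = ((x : ℕ) + (t - s)) % n := by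
      intro s hs
      have e3 : ((p:ℕ) + n - s) + s = (p:ℕ) + n := by
        have : s < n := by omega
        omega
      have e4 : ((x:ℕ) + (t - s)) + s = (x:ℕ) + t := by omega
      have : (((p:ℕ) + n - s) + s) % n = (((x:ℕ) + (t - s)) + s) % n := by
        rw [e3, e4, Nat.add_mod_right]
        exact hpmod
      exact Nat.ModEq.add_right_cancel' _ this
    have hBt : Bk n hn σ hne p = t := by
      have hle : Bk n hn σ hne p ≤ t := by
        apply Nat.find_le
        refine ⟨by omega, ?_⟩
        rw [sp_congr n hn σ (hcongT t le_rfl)]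
        simpa using hxf
      rcases Nat.lt_or_ge (Bk n hn σ hne p) t with hlt | hge
      · exfalso
        set s := Bk n hn σ hne p with hsdef
        have hsp : sp n hn σ ((p : ℕ) + n - s) = false := (Bk_spec (hn := hn) hne p).2
        rw [sp_congr n hn σ (hcongT s (by omega))] at hsp
        have : sp n hn σ ((x : ℕ) + (t - s)) = true := gap_min hxf (by omega) (by omega)
        rw [hsp] at this; exact Bool.false_ne_true this
      · omega
    rw [prevF, hBt]
    apply Fin.ext
    show ((p : ℕ) + n - t) % n = (x : ℕ)
    rw [hcongT t le_rfl]
    simp [Nat.mod_eq_of_lt x.isLt]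

lemma fiber_card (hne : ∃ y : Fin n, σ y = false) {x : Fin n} (hx : σ x = false) :
    (Finset.univ.filter (fun p => prevF n hn σ hne p = x)).card = gap n hn σ (x : ℕ) := by
  rw [fiber_eq hne hx, Finset.card_image_of_injOn, Finset.card_range]
  intro t1 h1 t2 h2 heq
  simp only [Finset.coe_range, Set.mem_Iio] at h1 h2
  have hxf : sp n hn σ (x : ℕ) = false := by rw [sp_val]; exact hx
  have hgn := gap_le_n hxf
  have := (posF_eq_iff n hn).1 heq
  have h3 : t1 % n = t2 % n := Nat.ModEq.add_left_cancel' _ this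
  rw [Nat.mod_eq_of_lt (by omega), Nat.mod_eq_of_lt (by omega)] at h3
  exact h3

lemma sum_gap (hne : ∃ y : Fin n, σ y = false) :
    ∑ x ∈ Finset.univ.filter (fun x => σ x = false), gap n hn σ (x : ℕ) = n := by
  have h := Finset.card_eq_sum_card_fiberwise
    (f := prevF n hn σ hne) (s := (Finset.univ : Finset (Fin n)))
    (t := Finset.univ.filter (fun x => σ x = false)) ?_
  · rw [Finset.card_univ, Fintype.card_fin] at h
    refine Eq.trans (Finset.sum_congr rfl ?_) h.symm
    intro x hx
    simp only [Finset.mem_filter] at hx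
    exact (fiber_card hne hx.2).symm  -- orientation
  · intro p _
    simp only [Finset.coe_filter, Finset.mem_coe, Finset.mem_filter, Finset.mem_univ, true_and, Set.mem_setOf_eq]
    exact prevF_false hne p
end
end S0
namespace S0
section
variable {n : ℕ} {hn : 0 < n} {σ : Fin n → Bool}

/-- the next false position. -/
noncomputable def nxt (n : ℕ) (hn : 0 < n) (σ : Fin n → Bool) (x : Fin n) : Fin n :=
  posF n hn ((x : ℕ) + gap n hn σ (x : ℕ))

lemma nxt_false {x : Fin n} (hx : σ x = false) : σ (nxt n hn σ x) = false := by
  have hxf : sp n hn σ (x : ℕ) = false := by rw [sp_val]; exact hx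
  exact (gap_spec hxf).2

lemma gap_nxt {x : Fin n} (hx : σ x = false) :
    gap n hn σ ((nxt n hn σ x : Fin n) : ℕ) = gap n hn σ ((x : ℕ) + gap n hn σ (x : ℕ)) := by
  have hxf : sp n hn σ (x : ℕ) = false := by rw [sp_val]; exact hx
  refine gap_congr ?_ ?_
  · show ((x : ℕ) + gap n hn σ (x : ℕ)) % n % n = ((x : ℕ) + gap n hn σ (x : ℕ)) % n
    exact Nat.mod_mod_of_dvd _ dvd_rfl
  · show sp n hn σ ((nxt n hn σ x : Fin n) : ℕ) = false
    rw [sp_val]; exact nxt_false hx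

lemma mod_decomp (n a : ℕ) (ha : a < 2*n) : a = a % n ∨ a = a % n + n := by
  rcases Nat.lt_or_ge a n with h|h
  · left; rw [Nat.mod_eq_of_lt h]
  · right
    have h2 : a % n = a - n := by
      conv_lhs => rw [show a = (a - n) + n by omega]
      rw [Nat.add_mod_right, Nat.mod_eq_of_lt (by omega)]
    omega

lemma mod_cases {n a b : ℕ} (hn : 0 < n) (ha : a < 2*n) (hb : b < 2*n)
    (h : a % n = b % n) : a = b ∨ a = b + n ∨ b = a + n := by
  rcases mod_decomp n a ha with h1|h1 <;> rcases mod_decomp n b hb with h2|h2 <;> omega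

lemma nxt_injOn {x y : Fin n} (hx : σ x = false) (hy : σ y = false)
    (h : nxt n hn σ x = nxt n hn σ y) : x = y := by
  have hxf : sp n hn σ (x : ℕ) = false := by rw [sp_val]; exact hx
  have hyf : sp n hn σ (y : ℕ) = false := by rw [sp_val]; exact hy
  have hgx1 : 0 < gap n hn σ (x : ℕ) := (gap_spec hxf).1
  have hgy1 : 0 < gap n hn σ (y : ℕ) := (gap_spec hyf).1
  have hgxn : gap n hn σ (x : ℕ) ≤ n := gap_le_n hxf
  have hgyn : gap n hn σ (y : ℕ) ≤ n := gap_le_n hyf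
  have hAB : ((x : ℕ) + gap n hn σ (x : ℕ)) % n = ((y : ℕ) + gap n hn σ (y : ℕ)) % n :=
    (posF_eq_iff n hn).1 h
  have hxn : (x : ℕ) < n := x.isLt
  have hyn : (y : ℕ) < n := y.isLt
  have hcase := mod_cases hn (a := (x : ℕ) + gap n hn σ (x : ℕ))
    (b := (y : ℕ) + gap n hn σ (y : ℕ)) (by omega) (by omega) hAB
  rcases hcase with hc | hc | hc
  · rcases le_total (x : ℕ) (y : ℕ) with hle | hle
    · have := false_uniq hxf hyf hle (by omega)
      exact (Fin.ext this).symm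
    · have := false_uniq hyf hxf hle (by omega)
      exact Fin.ext this
  · -- x + gx = y + gy + n : use a = x, b = y + n
    exfalso
    have hyn' : sp n hn σ ((y : ℕ) + n) = false := by rw [sp_add_n]; exact hyf
    have := false_uniq hxf hyn' (by omega) (by omega)
    omega
  · exfalso
    have hxn' : sp n hn σ ((x : ℕ) + n) = false := by rw [sp_add_n]; exact hxf
    have := false_uniq hyf hxn' (by omega) (by omega)
    omega

lemma image_nxt (hne : ∃ y : Fin n, σ y = false) :
    (Finset.univ.filter (fun x => σ x = false)).image (nxt n hn σ) =
      Finset.univ.filter (fun x => σ x = false) := by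
  have hsub : (Finset.univ.filter (fun x => σ x = false)).image (nxt n hn σ) ⊆
      Finset.univ.filter (fun x => σ x = false) := by
    intro y hy
    simp only [Finset.mem_image, Finset.mem_filter, Finset.mem_univ, true_and] at hy ⊢
    obtain ⟨x, hx, rfl⟩ := hy
    exact nxt_false hx
  refine Finset.eq_of_subset_of_card_le hsub (le_of_eq ?_)
  symm
  apply Finset.card_image_of_injOn
  intro x hx y hy hxy
  simp only [Finset.coe_filter, Set.mem_setOf_eq] at hx hy
  exact nxt_injOn hx.2 hy.2 hxy

lemma sum_nxt (hne : ∃ y : Fin n, σ y = false) (f : Fin n → ℕ) :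
    ∑ x ∈ Finset.univ.filter (fun x => σ x = false), f (nxt n hn σ x) =
      ∑ x ∈ Finset.univ.filter (fun x => σ x = false), f x := by
  have hinj : ∀ x ∈ Finset.univ.filter (fun x : Fin n => σ x = false),
      ∀ y ∈ Finset.univ.filter (fun x : Fin n => σ x = false),
      nxt n hn σ x = nxt n hn σ y → x = y := by
    intro x hx y hy hxy
    simp only [Finset.mem_filter] at hx hy
    exact nxt_injOn hx.2 hy.2 hxy
  calc ∑ x ∈ Finset.univ.filter (fun x => σ x = false), f (nxt n hn σ x)
      = ∑ y ∈ (Finset.univ.filter (fun x => σ x = false)).image (nxt n hn σ), f y :=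
        (Finset.sum_image hinj).symm
    _ = ∑ x ∈ Finset.univ.filter (fun x => σ x = false), f x := by rw [image_nxt hne]

/-- The density bound, `2n ≤ k·|F|`, from the two gap constraints. -/
lemma density {k : ℕ} (hke : Even k)
    (h2 : ∀ x : Fin n, σ x = false → k / 2 + 1 ≤ gap n hn σ (x : ℕ) →
      gap n hn σ (x : ℕ) + gap n hn σ ((x : ℕ) + gap n hn σ (x : ℕ)) ≤ k)
    (hne : ∃ y : Fin n, σ y = false) :
    2 * n ≤ k * (Finset.univ.filter (fun x => σ x = false)).card := by
  have hk2 : k / 2 * 2 = k := Nat.div_mul_cancel hke.two_dvd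
  have key : ∀ x ∈ Finset.univ.filter (fun x : Fin n => σ x = false),
      gap n hn σ ((nxt n hn σ x : Fin n) : ℕ) + (gap n hn σ ((x : Fin n) : ℕ) - k / 2) ≤
        k / 2 + (gap n hn σ ((nxt n hn σ x : Fin n) : ℕ) - k / 2) := by
    intro x hx
    simp only [Finset.mem_filter] at hx
    rw [gap_nxt hx.2]
    rcases Nat.lt_or_ge (gap n hn σ ((x : Fin n) : ℕ)) (k / 2 + 1) with hlt | hge
    · omega
    · have h5 := h2 x hx.2 hge
      omega
  have hsum := Finset.sum_le_sum key
  rw [Finset.sum_add_distrib, Finset.sum_add_distrib, Finset.sum_const,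
      sum_nxt hne (fun x => gap n hn σ ((x : Fin n) : ℕ) - k / 2),
      sum_nxt hne (fun x => gap n hn σ ((x : Fin n) : ℕ))] at hsum
  rw [sum_gap hne] at hsum
  simp only [smul_eq_mul] at hsum
  have h4 : n ≤ (Finset.univ.filter (fun x => σ x = false)).card * (k / 2) := by omega
  calc 2 * n ≤ 2 * ((Finset.univ.filter (fun x => σ x = false)).card * (k / 2)) := by omega
    _ = (Finset.univ.filter (fun x => σ x = false)).card * (k / 2 * 2) := by ring
    _ = k * (Finset.univ.filter (fun x => σ x = false)).card := by rw [hk2, mul_comm]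

/-- For `n = k` : at least two falses. -/
lemma density_eq_case {k : ℕ} (hnk : n = k)
    (h1 : ∀ x : Fin n, σ x = false → gap n hn σ (x : ℕ) ≤ k - 1)
    (hne : ∃ y : Fin n, σ y = false) :
    2 ≤ (Finset.univ.filter (fun x => σ x = false)).card := by
  set Fv := Finset.univ.filter (fun x : Fin n => σ x = false) with hFv
  obtain ⟨y, hy⟩ := hne
  have hymem : y ∈ Fv := by simp [hFv, hy]
  have hcard1 : 1 ≤ Fv.card := Finset.card_pos.2 ⟨y, hymem⟩
  by_contra hcon
  have hcard : Fv.card = 1 := by omega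
  obtain ⟨z, hz⟩ := Finset.card_eq_one.1 hcard
  have hsg : ∑ x ∈ Fv, gap n hn σ (x : ℕ) = n := sum_gap ⟨y, hy⟩
  rw [hz, Finset.sum_singleton] at hsg
  have hzf : σ z = false := by
    have : z ∈ Fv := by rw [hz]; exact Finset.mem_singleton_self z
    simpa [hFv] using this
  have := h1 z hzf
  omega
end
end S0
namespace S0
section
variable (n : ℕ) (hn : 0 < n) (k j m : ℕ)

/-- the clause with head `x` (positive) and negative literals at `x+i`,
`i ∈ [1,k] \ {k-j}`. -/
noncomputable def clauseC (x : ℕ) : Clause n :=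
  fun p => if p = posF n hn x then some true
    else if ∃ i, 1 ≤ i ∧ i ≤ k ∧ i ≠ k - j ∧ p = posF n hn (x + i) then some false else none

noncomputable def PhiC : Cnf n :=
  (List.range m).flatMap (fun j => (List.range n).map (fun x => clauseC n hn k j x))

lemma mem_PhiC {c : Clause n} :
    c ∈ PhiC n hn k m ↔ ∃ j < m, ∃ x < n, c = clauseC n hn k j x := by
  simp only [PhiC, List.mem_flatMap, List.mem_map, List.mem_range]
  constructor
  · rintro ⟨j, hj, x, hx, rfl⟩; exact ⟨j, hj, x, hx, rfl⟩
  · rintro ⟨j, hj, x, hx, rfl⟩; exact ⟨j, hj, x, hx, rfl⟩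

lemma satCnf_true : satCnf (fun _ => true) (PhiC n hn k m) := by
  intro c hc
  obtain ⟨j, _, x, _, rfl⟩ := (mem_PhiC n hn k m).1 hc
  exact ⟨posF n hn x, by simp [clauseC]⟩

variable {n hn k j m}

lemma clause_witness {σ : Assignment n} {x : ℕ} (hx : σ (posF n hn x) = false)
    (hs : clauseSat σ (clauseC n hn k j x)) :
    ∃ i, 1 ≤ i ∧ i ≤ k ∧ i ≠ k - j ∧ sp n hn σ (x + i) = false := by
  obtain ⟨p, hp⟩ := hs
  unfold clauseC at hp
  split_ifs at hp with h1 h2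
  · rw [h1, hx] at hp
    exact absurd hp (by simp)
  · obtain ⟨i, hi1, hi2, hi3, hpe⟩ := h2
    refine ⟨i, hi1, hi2, hi3, ?_⟩
    have hpf : σ p = false := by injection hp with h; exact h.symm
    show σ (posF n hn (x + i)) = false
    rw [← hpe]
    exact hpf

lemma constraint_A {σ : Assignment n} (hsat : satCnf σ (PhiC n hn k m)) (hm : 0 < m)
    {x : Fin n} (hx : σ x = false) : gap n hn σ (x : ℕ) ≤ k - 1 := by
  have hc : clauseC n hn k 0 (x : ℕ) ∈ PhiC n hn k m :=
    (mem_PhiC n hn k m).2 ⟨0, hm, (x : ℕ), x.isLt, rfl⟩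
  have hx' : σ (posF n hn (x : ℕ)) = false := by rw [posF_val]; exact hx
  obtain ⟨i, hi1, hi2, hi3, hif⟩ := clause_witness hx' (hsat _ hc)
  have : gap n hn σ (x : ℕ) ≤ i := gap_le (by omega) hif
  omega

lemma constraint_B {σ : Assignment n} (hsat : satCnf σ (PhiC n hn k m))
    (hm : m = k / 2) (hk4 : 4 ≤ k) (hke : Even k)
    {x : Fin n} (hx : σ x = false) (hge : k / 2 + 1 ≤ gap n hn σ (x : ℕ)) :
    gap n hn σ (x : ℕ) + gap n hn σ ((x : ℕ) + gap n hn σ (x : ℕ)) ≤ k := by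
  have hk2 : k / 2 * 2 = k := Nat.div_mul_cancel hke.two_dvd
  set g := gap n hn σ (x : ℕ) with hg
  have hgk : g ≤ k - 1 := constraint_A hsat (by omega) hx
  have hxf : sp n hn σ (x : ℕ) = false := by rw [sp_val]; exact hx
  set j := k - g with hj
  have hjm : j < m := by omega
  have hc : clauseC n hn k j (x : ℕ) ∈ PhiC n hn k m :=
    (mem_PhiC n hn k m).2 ⟨j, hjm, (x : ℕ), x.isLt, rfl⟩
  have hx' : σ (posF n hn (x : ℕ)) = false := by rw [posF_val]; exact hx
  obtain ⟨i, hi1, hi2, hi3, hif⟩ := clause_witness hx' (hsat _ hc)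
  have hig : i ≠ g := by omega
  have higt : g < i := by
    by_contra hcon
    push_neg at hcon
    have : sp n hn σ ((x : ℕ) + i) = true := gap_min hxf (by omega) (by omega)
    rw [hif] at this
    exact Bool.false_ne_true this
  have : sp n hn σ (((x : ℕ) + g) + (i - g)) = false := by
    rw [show ((x : ℕ) + g) + (i - g) = (x : ℕ) + i by omega]
    exact hif
  have h2 : gap n hn σ ((x : ℕ) + g) ≤ i - g := gap_le (by omega) this
  omega
end
end S0
namespace S0
section
variable {n k j m : ℕ} {hn : 0 < n}

/-- offsets appearing in a clause. -/
noncomputable def offs (k j : ℕ) : Finset ℕ := insert 0 ((Finset.Icc 1 k).erase (k - j))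

lemma card_offs (hj : j + 1 ≤ k) : (offs k j).card = k := by
  have h1 : (k - j) ∈ Finset.Icc 1 k := by
    simp only [Finset.mem_Icc]; omega
  have h0 : (0 : ℕ) ∉ (Finset.Icc 1 k).erase (k - j) := by
    simp [Finset.mem_erase]
  rw [offs, Finset.card_insert_of_notMem h0, Finset.card_erase_of_mem h1,
    Nat.card_Icc]
  omega

lemma isSome_iff {x : ℕ} {p : Fin n} :
    (clauseC n hn k j x p).isSome ↔ ∃ s ∈ offs k j, p = posF n hn (x + s) := by
  unfold clauseC
  split_ifs with h1 h2
  · simp only [Option.isSome_some, true_iff]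
    exact ⟨0, by simp [offs], by simpa using h1⟩
  · simp only [Option.isSome_some, true_iff]
    obtain ⟨i, hi1, hi2, hi3, hpe⟩ := h2
    exact ⟨i, by simp only [offs, Finset.mem_insert, Finset.mem_erase, Finset.mem_Icc]; omega, hpe⟩
  · push_neg at h2
    simp only [Option.isSome_none, Bool.false_eq_true, false_iff]
    rintro ⟨s, hs, rfl⟩
    simp only [offs, Finset.mem_insert, Finset.mem_erase, Finset.mem_Icc] at hs
    rcases hs with rfl | hs
    · exact h1 (by rw [Nat.add_zero])
    · exact h2 s (by omega) (by omega) hs.1 rfl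

lemma clauseVars_card (hkn : k ≤ n) (hk1 : 1 ≤ k) (hj : j + 1 ≤ k)
    (hcase : k < n ∨ j = 0) {x : ℕ} :
    (clauseVars (clauseC n hn k j x)).card = k := by
  have hslt : ∀ s ∈ offs k j, s < n := by
    intro s hs
    simp only [offs, Finset.mem_insert, Finset.mem_erase, Finset.mem_Icc] at hs
    rcases hcase with h | h
    · omega
    · subst h; omega
  have hset : clauseVars (clauseC n hn k j x) = (offs k j).image (fun s => posF n hn (x + s)) := by
    ext p
    simp only [clauseVars, Finset.mem_filter, Finset.mem_univ, true_and, Finset.mem_image]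
    rw [isSome_iff]
    constructor
    · rintro ⟨s, hs, rfl⟩; exact ⟨s, hs, rfl⟩
    · rintro ⟨s, hs, rfl⟩; exact ⟨s, hs, rfl⟩
  rw [hset, Finset.card_image_of_injOn, card_offs hj]
  intro s1 h1 s2 h2 heq
  rw [Finset.mem_coe] at h1 h2
  have e1 := (posF_eq_iff n hn).1 heq
  have e2 : s1 % n = s2 % n := Nat.ModEq.add_left_cancel' x e1
  rwa [Nat.mod_eq_of_lt (hslt _ h1), Nat.mod_eq_of_lt (hslt _ h2)] at e2

lemma degree_append (Φ₁ Φ₂ : Cnf n) (i : Fin n) :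
    degree (Φ₁ ++ Φ₂) i = degree Φ₁ i + degree Φ₂ i := by
  simp [degree, List.filter_append]

lemma degree_family (hkn : k ≤ n) (hj : j + 1 ≤ k) (i : Fin n) :
    degree ((List.range n).map (fun x => clauseC n hn k j x)) i ≤ k := by
  unfold degree
  rw [List.filter_map, List.length_map]
  set l := (List.range n).filter ((fun c => (c i).isSome) ∘ (fun x => clauseC n hn k j x)) with hl
  have hnd : l.Nodup := List.Nodup.filter _ (List.nodup_range (n := n))
  rw [← List.toFinset_card_of_nodup hnd]
  have hsub : l.toFinset ⊆ (offs k j).image (fun s => ((i : ℕ) + 2 * n - s) % n) := by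
    intro x hx
    simp only [hl, List.mem_toFinset, List.mem_filter, List.mem_range, Function.comp] at hx
    obtain ⟨hxn, hiss⟩ := hx
    have hiss' : (clauseC n hn k j x i).isSome := by simpa using hiss
    obtain ⟨s, hs, hpe⟩ := isSome_iff.1 hiss'
    have hsn : s ≤ n := by
      simp only [offs, Finset.mem_insert, Finset.mem_erase, Finset.mem_Icc] at hs
      omega
    simp only [Finset.mem_image]
    refine ⟨s, hs, ?_⟩
    have hival : (i : ℕ) = (x + s) % n := congrArg Fin.val hpe
    have m0 : Nat.ModEq n (i : ℕ) (x + s) := by rw [hival]; exact Nat.mod_modEq _ _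
    have m1 : Nat.ModEq n ((i : ℕ) + 2 * n) (x + s) := by
      have := Nat.ModEq.add_right (2 * n) m0
      calc (i : ℕ) + 2*n ≡ x + s + 2*n [MOD n] := this
        _ ≡ x + s [MOD n] := by
            rw [show x + s + 2*n = x + s + n + n by ring]
            exact (Nat.ModEq.add_right _ (Nat.ModEq.refl _)).trans
              (by rw [Nat.ModEq, Nat.add_mod_right, Nat.add_mod_right])
    have m2 : Nat.ModEq n (((i : ℕ) + 2 * n - s) + s) (x + s) := by
      rw [show ((i : ℕ) + 2*n - s) + s = (i : ℕ) + 2*n by omega]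
      exact m1
    have m3 : Nat.ModEq n ((i : ℕ) + 2 * n - s) x := Nat.ModEq.add_right_cancel' s m2
    have : x % n = ((i : ℕ) + 2 * n - s) % n := m3.symm
    rw [Nat.mod_eq_of_lt hxn] at this
    exact this.symm ▸ rfl
  calc l.toFinset.card ≤ ((offs k j).image (fun s => ((i : ℕ) + 2 * n - s) % n)).card :=
        Finset.card_le_card hsub
    _ ≤ (offs k j).card := Finset.card_image_le
    _ = k := card_offs hj
end
end S0
namespace S0
section
variable {n k : ℕ} {hn : 0 < n}

lemma degree_PhiC (hkn : k ≤ n) (hk2 : 2 ≤ k) {m : ℕ} (hm : m ≤ k / 2) (i : Fin n) :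
    degree (PhiC n hn k m) i ≤ m * k := by
  induction m with
  | zero => simp [PhiC, degree]
  | succ m ih =>
    have h1 : PhiC n hn k (m + 1) = PhiC n hn k m ++
        (List.range n).map (fun x => clauseC n hn k m x) := by
      rw [PhiC, List.range_succ, List.flatMap_append]
      simp [PhiC]
    rw [h1, degree_append]
    have h2 : m + 1 ≤ k := by omega
    have h3 := degree_family (hn := hn) (j := m) hkn h2 i
    have h4 := ih (by omega)
    have h5 : (m + 1) * k = m * k + k := by ring
    omega

lemma mTrue_le (σ : Assignment n) : mTrue σ ≤ n := by
  have := Finset.card_filter_le (Finset.univ : Finset (Fin n)) (fun i => σ i = true)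
  simpa [mTrue] using this

lemma mTrue_add_nFalse (σ : Assignment n) : mTrue σ + nFalse σ = n := by
  have := Finset.card_filter_add_card_filter_not
    (s := (Finset.univ : Finset (Fin n))) (p := fun i => σ i = true)
  simp only [Finset.card_univ, Fintype.card_fin] at this
  rw [mTrue, nFalse]
  have heq : (Finset.univ.filter (fun i => ¬(σ i = true))) =
      (Finset.univ.filter (fun i => σ i = false)) := by
    apply Finset.filter_congr
    intro i _
    simp [Bool.not_eq_true]
  rw [← heq]
  exact this

lemma mTrue_allTrue : mTrue (fun _ => true : Assignment n) = n := by
  simp [mTrue]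

lemma mTrue_allFalse : mTrue (fun _ => false : Assignment n) = 0 := by
  simp [mTrue]

lemma weight_nonneg (β : ℝ) (Φ : Cnf n) (σ : Assignment n) : 0 ≤ weight β Φ σ := by
  rw [weight]
  split_ifs
  · exact (Real.exp_pos _).le
  · exact le_refl 0

/-- The key analytic bound. -/
lemma main_bound (hk4 : 4 ≤ k) (Φ : Cnf n)
    (hsatT : satCnf (fun _ => true) Φ)
    (hdens : ∀ σ : Assignment n, satCnf σ Φ → σ ≠ (fun _ => true) →
      2 * n ≤ k * nFalse σ)
    {β : ℝ} (hβ : (k : ℝ) * Real.log 2 ≤ β) :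
    1 / (1 + (2 : ℝ) ^ (-(n : ℤ))) ≤ prob β Φ (fun _ => true) := by
  have hl2 : (0:ℝ) < Real.log 2 := Real.log_pos (by norm_num)
  set σT : Assignment n := fun _ => true with hσT
  have hwT : weight β Φ σT = Real.exp (β * n) := by
    rw [weight, if_pos hsatT, mTrue_allTrue]
  -- bound each other weight
  have hbound : ∀ τ ∈ Finset.univ.erase σT,
      weight β Φ τ ≤ Real.exp (β * n) * Real.exp (-(2 * n * Real.log 2)) := by
    intro τ hτ
    have hτne : τ ≠ σT := (Finset.mem_erase.1 hτ).1
    rw [weight]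
    split_ifs with hs
    · have hd := hdens τ hs hτne
      have hmn : mTrue τ + nFalse τ = n := mTrue_add_nFalse τ
      have hcast : (mTrue τ : ℝ) = (n : ℝ) - (nFalse τ : ℝ) := by
        have : ((mTrue τ + nFalse τ : ℕ) : ℝ) = (n : ℝ) := by rw [hmn]
        push_cast at this
        linarith
      rw [← Real.exp_add]
      apply Real.exp_le_exp.2
      rw [hcast]
      have hdc : ((2 * n : ℕ) : ℝ) ≤ ((k * nFalse τ : ℕ) : ℝ) := by exact_mod_cast hd
      push_cast at hdc
      have h1 : (2 * (n:ℝ)) * Real.log 2 ≤ ((k:ℝ) * (nFalse τ : ℝ)) * Real.log 2 :=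
        mul_le_mul_of_nonneg_right hdc hl2.le
      have h2 : ((k:ℝ) * Real.log 2) * (nFalse τ : ℝ) ≤ β * (nFalse τ : ℝ) :=
        mul_le_mul_of_nonneg_right hβ (by positivity)
      nlinarith [hl2.le]
    · positivity
  -- sum bound
  have hcard : (Finset.univ.erase σT).card = 2 ^ n - 1 := by
    rw [Finset.card_erase_of_mem (Finset.mem_univ _), Finset.card_univ]
    congr 1
    simp [Assignment]
  have hsum : ∑ τ ∈ Finset.univ.erase σT, weight β Φ τ ≤
      ((2 ^ n - 1 : ℕ) : ℝ) * (Real.exp (β * n) * Real.exp (-(2 * n * Real.log 2))) := by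
    have := Finset.sum_le_card_nsmul _ _ _ hbound
    rw [hcard] at this
    simpa [nsmul_eq_mul] using this
  have hZsplit : Zfun β Φ = weight β Φ σT + ∑ τ ∈ Finset.univ.erase σT, weight β Φ τ :=
    (Finset.add_sum_erase _ _ (Finset.mem_univ σT)).symm
  -- numeric bound
  have hE : ((2 ^ n - 1 : ℕ) : ℝ) * Real.exp (-(2 * n * Real.log 2)) ≤ (2:ℝ) ^ (-(n:ℤ)) := by
    have hexp : Real.exp ((2 * n : ℕ) * Real.log 2) = (2:ℝ) ^ (2 * n) := by
      rw [Real.exp_nat_mul, Real.exp_log (by norm_num : (0:ℝ) < 2)]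
    have hE1 : Real.exp (-(2 * n * Real.log 2)) = ((2:ℝ) ^ (2 * n))⁻¹ := by
      rw [Real.exp_neg, ← hexp]
      congr 2
      push_cast
      ring
    rw [hE1]
    have hc1 : ((2 ^ n - 1 : ℕ) : ℝ) ≤ (2:ℝ) ^ n := by
      have : ((2 ^ n - 1 : ℕ) : ℝ) ≤ ((2 ^ n : ℕ) : ℝ) := by exact_mod_cast Nat.sub_le _ _
      simpa using this
    have hc2 : (2:ℝ) ^ n * ((2:ℝ) ^ (2 * n))⁻¹ = (2:ℝ) ^ (-(n:ℤ)) := by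
      rw [zpow_neg, zpow_natCast]
      rw [two_mul, pow_add]
      field_simp
    calc ((2 ^ n - 1 : ℕ) : ℝ) * ((2:ℝ) ^ (2 * n))⁻¹ ≤ (2:ℝ) ^ n * ((2:ℝ) ^ (2 * n))⁻¹ := by
          apply mul_le_mul_of_nonneg_right hc1 (by positivity)
      _ = (2:ℝ) ^ (-(n:ℤ)) := hc2
  have hZle : Zfun β Φ ≤ Real.exp (β * n) * (1 + (2:ℝ) ^ (-(n:ℤ))) := by
    rw [hZsplit, hwT, mul_add, mul_one]
    have : ((2 ^ n - 1 : ℕ) : ℝ) * (Real.exp (β * n) * Real.exp (-(2 * n * Real.log 2))) =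
        Real.exp (β * n) * (((2 ^ n - 1 : ℕ) : ℝ) * Real.exp (-(2 * n * Real.log 2))) := by ring
    have h6 : ∑ τ ∈ Finset.univ.erase σT, weight β Φ τ ≤
        Real.exp (β * n) * (2:ℝ) ^ (-(n:ℤ)) := by
      calc ∑ τ ∈ Finset.univ.erase σT, weight β Φ τ ≤ _ := hsum
        _ = Real.exp (β * n) * (((2 ^ n - 1 : ℕ) : ℝ) * Real.exp (-(2 * n * Real.log 2))) := this
        _ ≤ Real.exp (β * n) * (2:ℝ) ^ (-(n:ℤ)) :=
            mul_le_mul_of_nonneg_left hE (Real.exp_pos _).le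
    linarith
  have hZpos : 0 < Zfun β Φ := by
    rw [hZsplit, hwT]
    have : (0:ℝ) ≤ ∑ τ ∈ Finset.univ.erase σT, weight β Φ τ :=
      Finset.sum_nonneg (fun τ _ => weight_nonneg β Φ τ)
    have := Real.exp_pos (β * n)
    linarith
  have hden : (0:ℝ) < 1 + (2:ℝ) ^ (-(n:ℤ)) := by positivity
  rw [prob, hwT]
  rw [div_le_div_iff₀ hden hZpos]
  rw [one_mul]
  calc Zfun β Φ ≤ Real.exp (β * n) * (1 + (2:ℝ) ^ (-(n:ℤ))) := hZle
    _ = Real.exp (β * n) * (1 + (2:ℝ) ^ (-(n:ℤ))) := rfl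
end
end S0
namespace S0
section
variable {n k : ℕ} {hn : 0 < n}

def m0 (n k : ℕ) : ℕ := if n = k then 1 else k / 2

lemma density_Phi (hk4 : 4 ≤ k) (hke : Even k) (hkn : k ≤ n)
    {σ : Assignment n} (hsat : satCnf σ (PhiC n hn k (m0 n k)))
    (hne' : σ ≠ (fun _ => true)) : 2 * n ≤ k * nFalse σ := by
  have hne : ∃ y : Fin n, σ y = false := by
    by_contra hcon
    push_neg at hcon
    exact hne' (funext fun y => by
      have := hcon y
      cases h : σ y
      · exact absurd h (this)
      · rfl)
  rw [nFalse]
  by_cases hnk : n = k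
  · have hm : m0 n k = 1 := by simp [m0, hnk]
    rw [hm] at hsat
    have h2 := density_eq_case (hn := hn) (σ := σ) hnk
      (fun x hx => constraint_A hsat (by omega) hx) hne
    have hkn2 : 2 * n = 2 * k := by omega
    calc 2 * n = k * 2 := by omega
      _ ≤ k * (Finset.univ.filter (fun x => σ x = false)).card :=
          Nat.mul_le_mul_left k h2
  · have hm : m0 n k = k / 2 := by simp [m0, hnk]
    rw [hm] at hsat
    exact density (hn := hn) hke
      (fun x hx hge => constraint_B hsat rfl hk4 hke hx hge) hne

/-- flipping all literals -/
def flipC {n : ℕ} (c : Clause n) : Clause n := fun p => (c p).map not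
def flipF {n : ℕ} (Φ : Cnf n) : Cnf n := Φ.map flipC

lemma clauseVars_flip (c : Clause n) : clauseVars (flipC c) = clauseVars c := by
  ext p
  simp [clauseVars, flipC]

lemma degree_flip (Φ : Cnf n) (i : Fin n) : degree (flipF Φ) i = degree Φ i := by
  rw [degree, flipF, List.filter_map, List.length_map, degree]
  congr 1
  apply List.filter_congr
  intro c _
  simp [flipC]

lemma clauseSat_flip (σ : Assignment n) (c : Clause n) :
    clauseSat σ (flipC c) ↔ clauseSat (fun i => !(σ i)) c := by
  unfold clauseSat flipC
  constructor
  · rintro ⟨p, hp⟩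
    refine ⟨p, ?_⟩
    cases h : c p
    · rw [h] at hp; simp at hp
    · rw [h] at hp
      simp only [Option.map_some] at hp
      injection hp with h2
      show some _ = some (!(σ p))
      rw [← h2, Bool.not_not]
  · rintro ⟨p, hp⟩
    refine ⟨p, ?_⟩
    rw [hp]
    simp

lemma satCnf_flip (σ : Assignment n) (Φ : Cnf n) :
    satCnf σ (flipF Φ) ↔ satCnf (fun i => !(σ i)) Φ := by
  unfold satCnf
  constructor
  · intro h c hc
    have := h (flipC c) (List.mem_map_of_mem (f := flipC) hc)
    exact (clauseSat_flip σ c).1 this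
  · intro h c hc
    obtain ⟨c', hc', rfl⟩ := List.mem_map.1 hc
    exact (clauseSat_flip σ c').2 (h c' hc')

lemma mTrue_not (σ : Assignment n) : mTrue (fun i => !(σ i)) = nFalse σ := by
  unfold mTrue nFalse
  congr 1
  apply Finset.filter_congr
  intro i _
  simp

def flipE (n : ℕ) : Assignment n ≃ Assignment n where
  toFun := fun τ i => !(τ i)
  invFun := fun τ i => !(τ i)
  left_inv := fun τ => funext fun i => Bool.not_not _
  right_inv := fun τ => funext fun i => Bool.not_not _

lemma weight_flip (β : ℝ) (Φ : Cnf n) (τ : Assignment n) :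
    weight β (flipF Φ) (flipE n τ) = Real.exp (β * n) * weight (-β) Φ τ := by
  unfold weight
  have hs : satCnf (flipE n τ) (flipF Φ) ↔ satCnf τ Φ := by
    rw [satCnf_flip]
    have : (fun i => !((flipE n τ) i)) = τ := funext fun i => Bool.not_not _
    rw [this]
  have hm : mTrue (flipE n τ) = nFalse τ := mTrue_not τ
  split_ifs with h1 h2
  · rw [hm]
    rw [← Real.exp_add]
    congr 1
    have hmn := mTrue_add_nFalse τ
    have : ((nFalse τ : ℕ) : ℝ) = (n : ℝ) - (mTrue τ : ℝ) := by
      have : ((mTrue τ + nFalse τ : ℕ) : ℝ) = (n:ℝ) := by rw [hmn]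
      push_cast at this
      linarith
    rw [this]
    ring
  · exact absurd (hs.1 h1) h2
  · exact absurd (hs.2 (by assumption)) h1
  · simp

lemma Zfun_flip (β : ℝ) (Φ : Cnf n) :
    Zfun β (flipF Φ) = Real.exp (β * n) * Zfun (-β) Φ := by
  unfold Zfun
  calc ∑ τ : Assignment n, weight β (flipF Φ) τ
      = ∑ τ : Assignment n, weight β (flipF Φ) (flipE n τ) :=
        (Fintype.sum_equiv (flipE n) (fun τ => weight β (flipF Φ) (flipE n τ))
          (fun τ => weight β (flipF Φ) τ) (fun τ => rfl)).symm
    _ = ∑ τ : Assignment n, Real.exp (β * n) * weight (-β) Φ τ :=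
        Finset.sum_congr rfl (fun τ _ => weight_flip β Φ τ)
    _ = Real.exp (β * n) * ∑ τ : Assignment n, weight (-β) Φ τ := by
        rw [Finset.mul_sum]

lemma prob_flip (β : ℝ) (Φ : Cnf n) :
    prob β (flipF Φ) (fun _ => false) = prob (-β) Φ (fun _ => true) := by
  unfold prob
  have h1 : (fun _ => false : Assignment n) = flipE n (fun _ => true) := rfl
  rw [h1, weight_flip, Zfun_flip]
  rw [mul_div_mul_left _ _ (Real.exp_ne_zero _)]
end
end S0


/-- for even `k ≥ 4`, `d ≥ k²/2` and `n ≥ k` a multiple of `k/2`, there are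
formulas in `Φ_{n,k,d}` concentrating (for `β ≥ k ln 2`, resp. `β ≤ -k ln 2`) nearly all mass
on the all-TRUE (resp. all-FALSE) assignment. -/
theorem stmt0 (k d n : ℕ) (hk4 : 4 ≤ k) (hke : Even k) (hd : k ^ 2 / 2 ≤ d)
    (hkn : k ≤ n) (hdvd : k / 2 ∣ n) :
    (∃ Φ : Cnf n, memPhi n k d Φ ∧ satCnf (fun _ => true) Φ ∧
      ∀ β : ℝ, (k : ℝ) * Real.log 2 ≤ β →
        1 / (1 + (2 : ℝ) ^ (-(n : ℤ))) ≤ prob β Φ (fun _ => true)) ∧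
    (∃ Φ' : Cnf n, memPhi n k d Φ' ∧
      ∀ β : ℝ, β ≤ -((k : ℝ) * Real.log 2) →
        1 / (1 + (2 : ℝ) ^ (-(n : ℤ))) ≤ prob β Φ' (fun _ => false)) := by
  have hn : 0 < n := by omega
  have hk2 : 2 ≤ k := by omega
  have hm0le : S0.m0 n k ≤ k / 2 := by
    rw [S0.m0]
    split_ifs
    · omega
    · exact le_rfl
  have hm0pos : 0 < S0.m0 n k := by
    rw [S0.m0]
    split_ifs
    · omega
    · omega
  have hsq : k ^ 2 / 2 = k / 2 * k := by
    obtain ⟨a, rfl⟩ := hke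
    have h1 : (a + a) ^ 2 = 2 * (a * (a + a)) := by ring
    have h2 : (a + a) / 2 = a := by omega
    rw [h1, h2, Nat.mul_div_cancel_left _ (by norm_num : 0 < 2)]
  set Φ := S0.PhiC n hn k (S0.m0 n k) with hΦ
  have hmem : memPhi n k d Φ := by
    constructor
    · intro c hc
      obtain ⟨j, hj, x, hx, rfl⟩ := (S0.mem_PhiC n hn k (S0.m0 n k)).1 hc
      apply S0.clauseVars_card hkn (by omega) (by omega)
      by_cases hnk : n = k
      · right
        have : S0.m0 n k = 1 := by simp [S0.m0, hnk]
        omega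
      · left; omega
    · intro i
      calc degree Φ i ≤ S0.m0 n k * k := S0.degree_PhiC hkn hk2 hm0le i
        _ ≤ k / 2 * k := Nat.mul_le_mul_right k hm0le
        _ = k ^ 2 / 2 := hsq.symm
        _ ≤ d := hd
  have hsatT : satCnf (fun _ => true) Φ := S0.satCnf_true n hn k (S0.m0 n k)
  have hdens : ∀ σ : Assignment n, satCnf σ Φ → σ ≠ (fun _ => true) →
      2 * n ≤ k * nFalse σ := fun σ hs hne => S0.density_Phi hk4 hke hkn hs hne
  have hpart1 : ∀ β : ℝ, (k : ℝ) * Real.log 2 ≤ β →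
      1 / (1 + (2 : ℝ) ^ (-(n : ℤ))) ≤ prob β Φ (fun _ => true) := by
    intro β hβ
    exact S0.main_bound hk4 Φ hsatT hdens hβ
  refine ⟨⟨Φ, hmem, hsatT, hpart1⟩, ⟨S0.flipF Φ, ?_, ?_⟩⟩
  · constructor
    · intro c hc
      obtain ⟨c', hc', rfl⟩ := List.mem_map.1 hc
      rw [S0.clauseVars_flip]
      exact hmem.1 c' hc'
    · intro i
      rw [S0.degree_flip]
      exact hmem.2 i
  · intro β hβ
    have hβ' : (k : ℝ) * Real.log 2 ≤ -β := by linarith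
    rw [S0.prob_flip]
    exact hpart1 (-β) hβ'
end

section
/- Let k ≥ 4 be an even integer and let n ≥ k be a multiple of k/2. If d ≥ k²/2 is an integer, then there is a formula Ψ₀ ∈ Φ_{n,k,d} such that every assignment σ satisfying Ψ₀ either has all n variables assigned TRUE, or assigns at least 2n/k variables to FALSE. Similarly (by symmetry), there is a formula Ψ₁ ∈ Φ_{n,k,d} such that every satisfying assignment of Ψ₁ either has all n variables assigned FALSE, or assigns at least 2n/k variables to TRUE. -/
open Real Finset

attribute [local instance] Classical.propDecidable

open Fin.NatCast Fin.CommRing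

def winClause (n k : ℕ) [NeZero n] (p : Fin n) (w : ℕ → Bool) : Clause n :=
  fun i => if (i - p).val < k then some (!(w (i - p).val)) else none

section win
variable {n k : ℕ} [NeZero n]

lemma sub_add_nat (p : Fin n) (t : ℕ) (ht : t < n) : ((p + (t : Fin n)) - p).val = t := by
  have : p + (t : Fin n) - p = (t : Fin n) := by ring
  rw [this, Fin.val_natCast, Nat.mod_eq_of_lt ht]

lemma exists_cast_add (p y : Fin n) : p + ((y - p).val : Fin n) = y := by
  rw [Fin.cast_val_eq_self]; ring

lemma clauseSat_winClause (hkn : k ≤ n) (σ : Assignment n) (p : Fin n) (w : ℕ → Bool) :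
    clauseSat σ (winClause n k p w) ↔ ∃ t, t < k ∧ σ (p + (t : Fin n)) ≠ w t := by
  constructor
  · rintro ⟨i, hi⟩
    unfold winClause at hi
    split at hi
    · rename_i hlt
      refine ⟨(i - p).val, hlt, ?_⟩
      rw [exists_cast_add p i]
      have : σ i = !(w (i - p).val) := by
        have := hi.symm; exact (Option.some.injEq _ _ ▸ this)
      simp [this]
    · exact absurd hi (by simp)
  · rintro ⟨t, htk, hne⟩
    refine ⟨p + (t : Fin n), ?_⟩
    unfold winClause
    rw [sub_add_nat p t (lt_of_lt_of_le htk hkn), if_pos htk]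
    cases hw : w t <;> cases hs : σ (p + (t : Fin n)) <;> simp_all

lemma card_clauseVars_winClause (hkn : k ≤ n) (p : Fin n) (w : ℕ → Bool) :
    (clauseVars (winClause n k p w)).card = k := by
  have hcv : clauseVars (winClause n k p w) =
      Finset.univ.filter (fun i => (i - p).val < k) := by
    unfold clauseVars winClause
    apply Finset.filter_congr
    intro i _
    split <;> simp_all
  rw [hcv, ← Finset.card_range k]
  apply Finset.card_bij' (fun i _ => (i - p).val) (fun t _ => p + (t : Fin n))
  · intro a ha
    simp only [Finset.mem_filter, Finset.card_range] at ha ⊢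
    simpa using ha.2
  · intro t ht
    simp only [Finset.mem_range, Finset.card_range] at ht ⊢
    simp only [Finset.mem_filter, Finset.mem_univ, true_and]
    rw [sub_add_nat p t (lt_of_lt_of_le ht hkn)]; exact ht
  · intro a _; exact exists_cast_add p a
  · intro t ht
    simp only [Finset.mem_range] at ht
    exact sub_add_nat p t (lt_of_lt_of_le ht hkn)

lemma degree_map_winClause (L : List (Fin n × (ℕ → Bool))) (i : Fin n) :
    degree (L.map (fun pr => winClause n k pr.1 pr.2)) i
      = L.countP (fun pr => decide ((i - pr.1).val < k)) := by
  unfold degree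
  rw [← List.countP_eq_length_filter, List.countP_map]
  apply List.countP_congr
  intro pr _
  simp only [Function.comp]
  unfold winClause
  split <;> simp_all

end win

section counting

lemma countP_range_eq (m : ℕ) (P : ℕ → Bool) :
    (List.range m).countP P = ((Finset.range m).filter (fun x => P x = true)).card := by
  induction m with
  | zero => simp
  | succ m ih =>
    rw [List.range_succ, List.countP_append, ih, Finset.range_add_one,
      Finset.filter_insert]
    have hm : m ∉ (Finset.range m).filter (fun x => P x = true) := by simp
    by_cases h : P m = true
    · rw [if_pos h, Finset.card_insert_of_notMem hm]
      simp [h, List.countP_cons]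
    · rw [if_neg h]
      simp [h, List.countP_cons]

lemma countP_flatMap' {α β : Type*} (f : α → List β) (P : β → Bool) (l : List α) :
    (l.flatMap f).countP P = (l.map fun a => (f a).countP P).sum := by
  induction l with
  | nil => simp
  | cons a l ih => simp [List.flatMap_cons, List.countP_append, ih]

lemma sum_map_range (s : ℕ) (g : ℕ → ℕ) :
    ((List.range s).map g).sum = ∑ l ∈ Finset.range s, g l := by
  induction s with
  | zero => simp
  | succ s ih => rw [List.range_succ, List.map_append, List.sum_append,
      Finset.sum_range_succ, ih]; simp

lemma sum_range_add' (f : ℕ → ℕ) (a b : ℕ) :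
    ∑ x ∈ Finset.range (a + b), f x
      = ∑ x ∈ Finset.range a, f x + ∑ t ∈ Finset.range b, f (a + t) := by
  induction b with
  | zero => simp
  | succ b ih => rw [← Nat.add_assoc, Finset.sum_range_succ, ih, Finset.sum_range_succ]; ring

lemma sum_range_mul' (f : ℕ → ℕ) (s h : ℕ) :
    ∑ x ∈ Finset.range (s * h), f x
      = ∑ l ∈ Finset.range s, ∑ t ∈ Finset.range h, f (l * h + t) := by
  induction s with
  | zero => simp
  | succ s ih =>
    rw [Nat.succ_mul, sum_range_add' f (s*h) h, ih, Finset.sum_range_succ]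

variable {n k : ℕ} [NeZero n]

/-- The count of window starts containing `i`, over all of `Fin n`, is at most `k`. -/
lemma K1 (hkn : k ≤ n) (i : Fin n) :
    ((Finset.range n).filter (fun x : ℕ => (i - (x : Fin n)).val < k)).card ≤ k := by
  have h := Finset.card_le_card_of_injOn (f := fun x : ℕ => ((i - (x : Fin n)).val))
    (s := (Finset.range n).filter (fun x : ℕ => (i - (x : Fin n)).val < k))
    (t := Finset.range k) ?_ ?_
  · simpa using h
  · intro x hx
    simp only [Finset.mem_coe, Finset.mem_filter] at hx
    simpa using hx.2
  · intro x hx y hy hxy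
    simp only [Finset.coe_filter, Set.mem_setOf_eq, Finset.mem_range] at hx hy
    have h1 : (((i - (x : Fin n)).val : Fin n)) = (((i - (y : Fin n)).val : Fin n)) :=
      congrArg (fun z : ℕ => (z : Fin n)) hxy
    rw [Fin.cast_val_eq_self, Fin.cast_val_eq_self] at h1
    have h2 : (x : Fin n) = (y : Fin n) := by
      exact sub_right_injective h1
    have := congrArg Fin.val h2
    rwa [Fin.val_natCast, Fin.val_natCast, Nat.mod_eq_of_lt hx.1, Nat.mod_eq_of_lt hy.1] at this

end counting

lemma K2 {n : ℕ} [NeZero n] (h s : ℕ) (hh : 0 < h) (hn : n = s * h) (i : Fin n) :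
    ((Finset.range s).filter
      (fun l : ℕ => (i - ((l * h : ℕ) : Fin n)).val < 2 * h)).card ≤ 2 := by
  have hiv : i.val < n := i.is_lt
  obtain ⟨q, t, hit, htl, hqs⟩ : ∃ q t, i.val = q * h + t ∧ t < h ∧ q < s := by
    refine ⟨i.val / h, i.val % h, ?_, Nat.mod_lt _ hh, ?_⟩
    · rw [mul_comm]; exact (Nat.div_add_mod _ _).symm
    · rw [Nat.div_lt_iff_lt_mul hh, ← hn]; exact hiv
  have hsubset : (Finset.range s).filter
      (fun l : ℕ => (i - ((l * h : ℕ) : Fin n)).val < 2 * h)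
      ⊆ {q, (q + s - 1) % s} := by
    intro l hl
    simp only [Finset.mem_filter, Finset.mem_range] at hl
    obtain ⟨hls, hcond⟩ := hl
    have hlh : l * h < n := by
      calc l * h < (l + 1) * h := by
            rw [add_mul]; omega
        _ ≤ s * h := Nat.mul_le_mul_right h (by omega)
        _ = n := hn.symm
    have hbv : (((l * h : ℕ) : Fin n)).val = l * h := by
      rw [Fin.val_natCast, Nat.mod_eq_of_lt hlh]
    have hsub : (i - ((l * h : ℕ) : Fin n)).val = ((n - l * h) + i.val) % n := by
      rw [Fin.sub_def, hbv]
    simp only [Finset.mem_insert, Finset.mem_singleton]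
    rcases le_or_gt l q with hlq | hql
    · obtain ⟨a, ha⟩ : ∃ a, q = l + a := ⟨q - l, by omega⟩
      have e0 : q * h = l * h + a * h := by rw [ha, add_mul]
      have e1 : n - l * h + i.val = n + (a * h + t) := by omega
      have e2 : a * h + t < n := by
        have : (a + 1) * h ≤ s * h := Nat.mul_le_mul_right h (by omega)
        rw [add_mul] at this; omega
      have hval : (i - ((l * h : ℕ) : Fin n)).val = a * h + t := by
        rw [hsub, e1, Nat.add_mod_left, Nat.mod_eq_of_lt e2]
      rw [hval] at hcond
      have ha1 : a ≤ 1 := by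
        by_contra hc
        have : 2 * h ≤ a * h := Nat.mul_le_mul_right h (by omega)
        omega
      interval_cases a
      · left; omega
      · right
        have hq1 : 1 ≤ q := by omega
        have : q + s - 1 = (q - 1) + s := by omega
        rw [this, Nat.add_mod_right, Nat.mod_eq_of_lt (by omega)]
        omega
    · have hbl : q < l := hql
      have e0 : n - l * h = (s - l) * h := by rw [hn, Nat.sub_mul]
      have e1 : n - l * h + i.val = (s - l) * h + q * h + t := by omega
      have e2 : (s - l) * h + q * h + t < n := by
        have : ((s - l) + q + 1) * h ≤ s * h := Nat.mul_le_mul_right h (by omega)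
        rw [add_mul, add_mul] at this; omega
      have hval : (i - ((l * h : ℕ) : Fin n)).val = (s - l) * h + q * h + t := by
        rw [hsub, e1, Nat.mod_eq_of_lt e2]
      rw [hval] at hcond
      have hsl1 : (s - l) + q ≤ 1 := by
        by_contra hc
        have : 2 * h ≤ ((s - l) + q) * h := Nat.mul_le_mul_right h (by omega)
        rw [add_mul] at this; omega
      have : s - l = 1 ∧ q = 0 := by omega
      right
      rw [this.2, Nat.zero_add, Nat.mod_eq_of_lt (by omega)]
      omega
  calc _ ≤ ({q, (q + s - 1) % s} : Finset ℕ).card := Finset.card_le_card hsubset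
    _ ≤ 2 := by
      apply le_trans (Finset.card_insert_le _ _)
      simp

lemma countP_decide_const (C : Prop) [Decidable C] (l : List ℕ) :
    l.countP (fun _ => decide C) = if C then l.length else 0 := by
  by_cases hC : C
  · have he : (fun _ : ℕ => decide C) = fun _ => true := by simp [hC]
    rw [he, if_pos hC]
    exact congrFun List.countP_true l
  · have he : (fun _ : ℕ => decide C) = fun _ => false := by simp [hC]
    rw [he, if_neg hC]
    exact congrFun List.countP_false l

lemma nFalse_eq_sum {n : ℕ} [NeZero n] (σ : Assignment n) :
    nFalse σ = ∑ x ∈ Finset.range n, (if σ (x : Fin n) = false then 1 else 0) := by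
  unfold nFalse
  rw [Finset.card_filter]
  rw [← Fin.sum_univ_eq_sum_range (fun x => if σ (x : Fin n) = false then 1 else 0) n]
  exact Finset.sum_congr rfl (fun i _ => by rw [Fin.cast_val_eq_self])

lemma mTrue_all {n : ℕ} (σ : Assignment n) (hall : ∀ i, σ i = true) : mTrue σ = n := by
  unfold mTrue
  rw [Finset.filter_true_of_mem (fun i _ => hall i), Finset.card_univ, Fintype.card_fin]

lemma coreBig (n k h s d : ℕ) [NeZero n] (hh : 3 ≤ h) (hk : k = 2 * h) (hn : n = s * h)
    (hs : 2 ≤ s) (hd : 2 * h * h ≤ d) :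
    ∃ Ψ : Cnf n, memPhi n k d Ψ ∧
      ∀ σ : Assignment n, satCnf σ Ψ → mTrue σ = n ∨ s ≤ nFalse σ := by
  have hkn : k ≤ n := by
    rw [hk, hn]; exact Nat.mul_le_mul_right h hs
  have hk1 : 1 ≤ k := by omega
  classical
  set wA : ℕ → ℕ → Bool := fun r t => decide (t ≠ r) with hwA
  set LB : List (Fin n × (ℕ → Bool)) :=
    (List.range n).map (fun x : ℕ => ((x : Fin n), wA (k - 1))) with hLB
  set LA : List (Fin n × (ℕ → Bool)) :=
    (List.range s).flatMap
      (fun l => (List.range k).map (fun r => (((l * h : ℕ) : Fin n), wA r))) with hLA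
  refine ⟨(LB ++ LA).map (fun pr => winClause n k pr.1 pr.2), ⟨?_, ?_⟩, ?_⟩
  · -- every clause has k variables
    intro c hc
    rw [List.mem_map] at hc
    obtain ⟨pr, _, rfl⟩ := hc
    exact card_clauseVars_winClause hkn pr.1 pr.2
  · -- degree bound
    intro i
    rw [degree_map_winClause, List.countP_append]
    have hNB : LB.countP (fun pr => decide ((i - pr.1).val < k)) ≤ k := by
      rw [hLB, List.countP_map]
      have : ((List.range n).countP
          ((fun pr : Fin n × (ℕ → Bool) => decide ((i - pr.1).val < k)) ∘
            (fun x : ℕ => ((x : Fin n), wA (k - 1)))))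
          = (List.range n).countP (fun x : ℕ => decide ((i - (x : Fin n)).val < k)) := rfl
      rw [this, countP_range_eq]
      have := K1 (n := n) (k := k) hkn i
      apply le_trans _ this
      apply le_of_eq
      congr 1
      apply Finset.filter_congr
      intro x _
      simp
    have hNA : LA.countP (fun pr => decide ((i - pr.1).val < k)) ≤ 2 * k := by
      rw [hLA, countP_flatMap']
      have hinner : ∀ l : ℕ,
          (((List.range k).map (fun r => (((l * h : ℕ) : Fin n), wA r))).countP
            (fun pr => decide ((i - pr.1).val < k)))
          = if (i - ((l * h : ℕ) : Fin n)).val < k then k else 0 := by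
        intro l
        rw [List.countP_map]
        have : ((fun pr : Fin n × (ℕ → Bool) => decide ((i - pr.1).val < k)) ∘
            (fun r : ℕ => (((l * h : ℕ) : Fin n), wA r)))
            = fun _ : ℕ => decide ((i - ((l * h : ℕ) : Fin n)).val < k) := rfl
        rw [this, countP_decide_const]
        simp
      rw [List.map_congr_left (fun l _ => hinner l), sum_map_range]
      rw [← Finset.sum_filter]
      rw [Finset.sum_const, smul_eq_mul]
      have hcard := K2 (n := n) h s (by omega) hn i
      calc _ ≤ 2 * k := by
            apply Nat.mul_le_mul_right
            rw [hk] at *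
            exact hcard
        _ = 2 * k := rfl
    calc LB.countP _ + LA.countP _ ≤ k + 2 * k := Nat.add_le_add hNB hNA
      _ ≤ d := by
        rw [hk]
        calc 2 * h + 2 * (2 * h) = 6 * h := by ring
          _ ≤ 2 * h * h := by nlinarith
          _ ≤ d := hd
  · -- satisfaction
    intro σ hsat
    by_cases hall : ∀ i, σ i = true
    · exact Or.inl (mTrue_all σ hall)
    right
    push_neg at hall
    obtain ⟨p₀, hp₀'⟩ := hall
    have hp₀ : σ p₀ = false := by revert hp₀'; cases σ p₀ <;> simp
    have hBp : ∀ p : Fin n, ∃ t, t < k ∧ σ (p + (t : Fin n)) ≠ wA (k - 1) t := by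
      intro p
      rw [← clauseSat_winClause hkn]
      apply hsat
      rw [List.mem_map]
      refine ⟨(p, wA (k - 1)), List.mem_append_left _ ?_, rfl⟩
      rw [hLB, List.mem_map]
      exact ⟨p.val, List.mem_range.2 p.is_lt, by rw [Fin.cast_val_eq_self]⟩
    have H1 : ∀ p : Fin n, σ (p + ((k - 1 : ℕ) : Fin n)) = false →
        ∃ t, t < k - 1 ∧ σ (p + (t : Fin n)) = false := by
      intro p hpf
      obtain ⟨t, htk, hne⟩ := hBp p
      by_cases hteq : t = k - 1
      · subst hteq
        have hwf : wA (k - 1) (k - 1) = false := by simp [hwA]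
        rw [hwf] at hne
        exact absurd hpf hne
      · have hw : wA (k - 1) t = true := by simp [hwA, hteq]
        rw [hw] at hne
        exact ⟨t, by omega, by simpa using hne⟩
    have cast_add_sub_val : ∀ (a : ℕ) (y : Fin n), ((a + (y - (a : Fin n)).val : ℕ) : Fin n) = y := by
      intro a y
      rw [Nat.cast_add, Fin.cast_val_eq_self]
      ring
    have H2 : ∀ l, l < s → ∃ r, r < k ∧ σ ((l * h + r : ℕ) : Fin n) = false := by
      intro l hls
      by_contra hwin'
      push_neg at hwin'
      have hwin : ∀ r, r < k → σ ((l * h + r : ℕ) : Fin n) = true := by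
        intro r hr
        have := hwin' r hr
        revert this; cases hσ : σ ((l * h + r : ℕ) : Fin n) <;> simp
      have hex : ∃ t : ℕ, σ ((l * h + k + t : ℕ) : Fin n) = false := by
        refine ⟨(p₀ - ((l * h + k : ℕ) : Fin n)).val, ?_⟩
        rw [cast_add_sub_val (l * h + k) p₀]
        exact hp₀
      obtain ⟨t₀, ht₀, hmin⟩ : ∃ t₀, σ ((l * h + k + t₀ : ℕ) : Fin n) = false ∧
          ∀ t', t' < t₀ → ¬ σ ((l * h + k + t' : ℕ) : Fin n) = false :=
        ⟨Nat.find hex, Nat.find_spec hex, fun t' ht' => Nat.find_min hex ht'⟩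
      have hzone : ∀ x, x < k + t₀ → σ ((l * h + x : ℕ) : Fin n) = true := by
        intro x hx
        by_cases hxk : x < k
        · exact hwin x hxk
        · have hxe : l * h + x = l * h + k + (x - k) := by omega
          rw [hxe]
          have hb := hmin (x - k) (by omega)
          revert hb; cases hσ : σ ((l * h + k + (x - k) : ℕ) : Fin n) <;> simp
      have hfalse : σ (((l * h + t₀ + 1 : ℕ) : Fin n) + ((k - 1 : ℕ) : Fin n)) = false := by
        rw [← Nat.cast_add]
        have he : l * h + t₀ + 1 + (k - 1) = l * h + k + t₀ := by omega
        rw [he]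
        exact ht₀
      obtain ⟨t, htk1, htf⟩ := H1 _ hfalse
      rw [← Nat.cast_add] at htf
      have he2 : l * h + t₀ + 1 + t = l * h + (t₀ + 1 + t) := by omega
      rw [he2] at htf
      have := hzone (t₀ + 1 + t) (by omega)
      rw [this] at htf
      exact absurd htf (by simp)
    have H3 : ∀ l, l < s → 2 ≤ ∑ t ∈ Finset.range k,
        (if σ ((l * h + t : ℕ) : Fin n) = false then 1 else 0) := by
      intro l hls
      obtain ⟨r, hrk, hrf⟩ := H2 l hls
      have hA : clauseSat σ (winClause n k ((l * h : ℕ) : Fin n) (wA r)) := by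
        apply hsat
        rw [List.mem_map]
        refine ⟨(((l * h : ℕ) : Fin n), wA r), List.mem_append_right _ ?_, rfl⟩
        rw [hLA, List.mem_flatMap]
        exact ⟨l, List.mem_range.2 hls, List.mem_map.2 ⟨r, List.mem_range.2 hrk, rfl⟩⟩
      rw [clauseSat_winClause hkn] at hA
      obtain ⟨t, htk, hne⟩ := hA
      rw [← Nat.cast_add] at hne
      by_cases htr : t = r
      · subst htr
        have hwf : wA t t = false := by simp [hwA]
        rw [hwf] at hne
        exact absurd hrf hne
      · have hw : wA r t = true := by simp [hwA, htr]
        rw [hw] at hne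
        have htf : σ ((l * h + t : ℕ) : Fin n) = false := by simpa using hne
        have hrt : r ≠ t := fun hh' => htr hh'.symm
        have hsub2 : ({r, t} : Finset ℕ) ⊆ Finset.range k := by
          intro x hx
          simp only [Finset.mem_insert, Finset.mem_singleton] at hx
          rcases hx with rfl | rfl <;> simp [Finset.mem_range, hrk, htk]
        calc (2 : ℕ) = ∑ x ∈ ({r, t} : Finset ℕ),
              (if σ ((l * h + x : ℕ) : Fin n) = false then 1 else 0) := by
              rw [Finset.sum_pair hrt, if_pos hrf, if_pos htf]
          _ ≤ _ := Finset.sum_le_sum_of_subset hsub2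
    -- final counting
    set b : ℕ → ℕ :=
      fun l => ∑ t ∈ Finset.range h, (if σ ((l * h + t : ℕ) : Fin n) = false then 1 else 0)
      with hbdef
    have hNF : nFalse σ = ∑ l ∈ Finset.range s, b l := by
      rw [nFalse_eq_sum, show Finset.range n = Finset.range (s * h) from by rw [hn],
        sum_range_mul']
    have hW : ∀ l : ℕ, ∑ t ∈ Finset.range k,
        (if σ ((l * h + t : ℕ) : Fin n) = false then 1 else 0) = b l + b (l + 1) := by
      intro l
      rw [hk, two_mul,
        sum_range_add' (fun t => if σ ((l * h + t : ℕ) : Fin n) = false then 1 else 0) h h]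
      congr 1
      apply Finset.sum_congr rfl
      intro t _
      have he : l * h + (h + t) = (l + 1) * h + t := by ring
      rw [he]
    have hshift : ∑ l ∈ Finset.range s, b (l + 1) = ∑ l ∈ Finset.range s, b l := by
      have h1 := Finset.sum_range_succ' b s
      have h2 := Finset.sum_range_succ b s
      have hbs : b s = b 0 := by
        rw [hbdef]
        apply Finset.sum_congr rfl
        intro t _
        have he : ((s * h + t : ℕ) : Fin n) = ((0 * h + t : ℕ) : Fin n) := by
          rw [Nat.cast_add, Nat.cast_add, ← hn, Fin.natCast_self, Nat.zero_mul]
          simp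
        rw [he]
      omega
    have e1 : ∑ l ∈ Finset.range s, (b l + b (l + 1))
        = ∑ l ∈ Finset.range s, b l + ∑ l ∈ Finset.range s, b (l + 1) :=
      Finset.sum_add_distrib
    have e2 : 2 * s ≤ ∑ l ∈ Finset.range s, (b l + b (l + 1)) := by
      calc 2 * s = ∑ _l ∈ Finset.range s, 2 := by
            rw [Finset.sum_const, Finset.card_range, smul_eq_mul, mul_comm]
        _ ≤ _ := Finset.sum_le_sum (fun l hl => by
            rw [← hW l]; exact H3 l (Finset.mem_range.1 hl))
    omega

lemma coreSmall (n s d : ℕ) [NeZero n] (hn : n = s * 2) (hs : 2 ≤ s) (hd : 8 ≤ d) :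
    ∃ Ψ : Cnf n, memPhi n 4 d Ψ ∧
      ∀ σ : Assignment n, satCnf σ Ψ → mTrue σ = n ∨ s ≤ nFalse σ := by
  have hkn : 4 ≤ n := by omega
  classical
  set w1 : ℕ → Bool := fun t => decide (t ≠ 0) with hw1
  set w2 : ℕ → Bool := fun t => decide (t = 1 ∨ t = 2) with hw2
  set L : List (Fin n × (ℕ → Bool)) :=
    (List.range n).map (fun x : ℕ => ((x : Fin n), w1)) ++
      (List.range n).map (fun x : ℕ => ((x : Fin n), w2)) with hL
  refine ⟨L.map (fun pr => winClause n 4 pr.1 pr.2), ⟨?_, ?_⟩, ?_⟩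
  · intro c hc
    rw [List.mem_map] at hc
    obtain ⟨pr, _, rfl⟩ := hc
    exact card_clauseVars_winClause hkn pr.1 pr.2
  · intro i
    rw [degree_map_winClause, hL, List.countP_append]
    have hcnt : ∀ w : ℕ → Bool,
        ((List.range n).map (fun x : ℕ => ((x : Fin n), w))).countP
          (fun pr => decide ((i - pr.1).val < 4)) ≤ 4 := by
      intro w
      rw [List.countP_map]
      have he : ((fun pr : Fin n × (ℕ → Bool) => decide ((i - pr.1).val < 4)) ∘
          (fun x : ℕ => ((x : Fin n), w)))
          = fun x : ℕ => decide ((i - (x : Fin n)).val < 4) := rfl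
      rw [he, countP_range_eq]
      refine le_trans (le_of_eq ?_) (K1 (n := n) (k := 4) hkn i)
      congr 1
      apply Finset.filter_congr
      intro x _
      simp
    calc _ ≤ 4 + 4 := Nat.add_le_add (hcnt w1) (hcnt w2)
      _ ≤ d := by omega
  · intro σ hsat
    by_cases hall : ∀ i, σ i = true
    · exact Or.inl (mTrue_all σ hall)
    right
    push_neg at hall
    obtain ⟨p₀, hp₀'⟩ := hall
    have hp₀ : σ p₀ = false := by revert hp₀'; cases σ p₀ <;> simp
    have hmem : ∀ (p : Fin n) (w : ℕ → Bool), w = w1 ∨ w = w2 →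
        ∃ t : ℕ, t < 4 ∧ σ (p + ((t : ℕ) : Fin n)) ≠ w t := by
      intro p w hw
      rw [← clauseSat_winClause hkn]
      apply hsat
      rw [List.mem_map]
      refine ⟨(p, w), ?_, rfl⟩
      rw [hL]
      rcases hw with rfl | rfl
      · exact List.mem_append_left _ (List.mem_map.2
          ⟨p.val, List.mem_range.2 p.is_lt, by rw [Fin.cast_val_eq_self]⟩)
      · exact List.mem_append_right _ (List.mem_map.2
          ⟨p.val, List.mem_range.2 p.is_lt, by rw [Fin.cast_val_eq_self]⟩)
    have HC : ∀ p : Fin n, σ p = false → σ (p + ((1 : ℕ) : Fin n)) = true →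
        σ (p + ((2 : ℕ) : Fin n)) = true → False := by
      intro p h0 h1 h2
      simp only [Nat.cast_one] at h1
      simp only [Nat.cast_ofNat] at h2
      obtain ⟨t, ht4, hne⟩ := hmem p w1 (Or.inl rfl)
      obtain ⟨t', ht4', hne'⟩ := hmem p w2 (Or.inr rfl)
      have h3 : σ (p + (3 : Fin n)) = false := by
        interval_cases t
        · simp only [Nat.cast_zero, add_zero] at hne; simp [hw1, h0] at hne
        · simp only [Nat.cast_one] at hne; simp [hw1, h1] at hne
        · simp only [Nat.cast_ofNat] at hne; simp [hw1, h2] at hne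
        · simp only [Nat.cast_ofNat] at hne; simp [hw1] at hne; exact hne
      have h3' : σ (p + (3 : Fin n)) = true := by
        interval_cases t'
        · simp only [Nat.cast_zero, add_zero] at hne'; simp [hw2, h0] at hne'
        · simp only [Nat.cast_one] at hne'; simp [hw2, h1] at hne'
        · simp only [Nat.cast_ofNat] at hne'; simp [hw2, h2] at hne'
        · simp only [Nat.cast_ofNat] at hne'; simp [hw2] at hne'; exact hne'
      rw [h3] at h3'
      exact absurd h3' (by simp)
    have hcast : ∀ (q : Fin n) (a b : ℕ), (q + (a : Fin n)) + (b : Fin n) = q + ((a + b : ℕ) : Fin n) := by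
      intro q a b
      rw [Nat.cast_add, add_assoc]
    have hchain : ∀ t : ℕ, σ (p₀ + (t : Fin n)) = false ∨ σ (p₀ + ((t + 1 : ℕ) : Fin n)) = false := by
      intro t
      induction t with
      | zero => left; simpa using hp₀
      | succ t ih =>
        by_cases h1 : σ (p₀ + ((t + 1 : ℕ) : Fin n)) = false
        · exact Or.inl h1
        rcases ih with hf | hf
        · have h1' : σ (p₀ + ((t + 1 : ℕ) : Fin n)) = true := by
            revert h1; cases σ (p₀ + ((t + 1 : ℕ) : Fin n)) <;> simp
          by_cases h2 : σ (p₀ + ((t + 2 : ℕ) : Fin n)) = false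
          · right
            have : t + 1 + 1 = t + 2 := rfl
            rw [this]
            exact h2
          · exfalso
            have h2' : σ (p₀ + ((t + 2 : ℕ) : Fin n)) = true := by
              revert h2; cases σ (p₀ + ((t + 2 : ℕ) : Fin n)) <;> simp
            exact HC (p₀ + (t : Fin n)) hf
              (by rw [hcast p₀ t 1]; exact h1')
              (by rw [hcast p₀ t 2]; exact h2')
        · exact absurd hf h1
    have hevery : ∀ x : ℕ, σ ((x : ℕ) : Fin n) = false ∨ σ ((x + 1 : ℕ) : Fin n) = false := by
      intro x
      have hpt : p₀ + ((((x : Fin n)) - p₀).val : Fin n) = (x : Fin n) := exists_cast_add p₀ _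
      have := hchain (((x : Fin n)) - p₀).val
      rcases this with hf | hf
      · left; rwa [hpt] at hf
      · right
        have he : p₀ + ((((x : Fin n)) - p₀).val + 1 : ℕ) = ((x + 1 : ℕ) : Fin n) := by
          rw [Nat.cast_add, ← add_assoc, hpt, Nat.cast_add]
        rwa [he] at hf
    have hNF : nFalse σ = ∑ l ∈ Finset.range s, ∑ t ∈ Finset.range 2,
        (if σ ((l * 2 + t : ℕ) : Fin n) = false then 1 else 0) := by
      rw [nFalse_eq_sum, show Finset.range n = Finset.range (s * 2) from by rw [hn],
        sum_range_mul']
    rw [hNF]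
    calc s = ∑ _l ∈ Finset.range s, 1 := by simp
      _ ≤ _ := by
        apply Finset.sum_le_sum
        intro l _
        have hsum2 : ∑ t ∈ Finset.range 2,
            (if σ ((l * 2 + t : ℕ) : Fin n) = false then 1 else 0)
            = (if σ ((l * 2 : ℕ) : Fin n) = false then 1 else 0)
              + (if σ ((l * 2 + 1 : ℕ) : Fin n) = false then 1 else 0) := by
          rw [Finset.sum_range_succ, Finset.sum_range_succ, Finset.sum_range_zero]
          simp
        rw [hsum2]
        rcases hevery (l * 2) with hf | hf
        · rw [if_pos hf]; omega
        · rw [if_pos hf]; omega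

def flipClause {n : ℕ} (c : Clause n) : Clause n := fun i => (c i).map (fun b => !b)

lemma clauseVars_flip {n : ℕ} (c : Clause n) : clauseVars (flipClause c) = clauseVars c := by
  unfold clauseVars flipClause
  apply Finset.filter_congr
  intro i _
  cases c i <;> simp

lemma degree_flip {n : ℕ} (Φ : Cnf n) (i : Fin n) :
    degree (Φ.map flipClause) i = degree Φ i := by
  unfold degree
  rw [← List.countP_eq_length_filter, ← List.countP_eq_length_filter, List.countP_map]
  apply List.countP_congr
  intro c _
  simp only [Function.comp]
  unfold flipClause
  cases c i <;> simp

lemma satCnf_flip {n : ℕ} (σ : Assignment n) (Φ : Cnf n) :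
    satCnf σ (Φ.map flipClause) ↔ satCnf (fun i => !(σ i)) Φ := by
  unfold satCnf
  constructor
  · intro hs c hc
    obtain ⟨i, hi⟩ := hs (flipClause c) (List.mem_map_of_mem hc)
    refine ⟨i, ?_⟩
    unfold flipClause at hi
    cases hci : c i <;> rw [hci] at hi <;> simp_all
  · intro hs c hc
    rw [List.mem_map] at hc
    obtain ⟨c₀, hc₀, rfl⟩ := hc
    obtain ⟨i, hi⟩ := hs c₀ hc₀
    refine ⟨i, ?_⟩
    unfold flipClause
    rw [hi]
    simp

lemma mTrue_not {n : ℕ} (σ : Assignment n) : mTrue (fun i => !(σ i)) = nFalse σ := by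
  unfold mTrue nFalse
  apply congrArg
  apply Finset.filter_congr
  intro i _
  simp

lemma nFalse_not {n : ℕ} (σ : Assignment n) : nFalse (fun i => !(σ i)) = mTrue σ := by
  unfold mTrue nFalse
  apply congrArg
  apply Finset.filter_congr
  intro i _
  simp


/-- the gadget lemma. For even `k ≥ 4`, `n ≥ k` a multiple of `k/2`, and
`d ≥ k²/2`, there are formulas `Ψ₀, Ψ₁ ∈ Φ_{n,k,d}` such that every satisfying assignment
of `Ψ₀` is either all-TRUE or has at least `2n/k` FALSEs, and symmetrically for `Ψ₁`. -/
theorem stmt3 (k n d : ℕ) (hk4 : 4 ≤ k) (hke : Even k) (hkn : k ≤ n) (hdvd : k / 2 ∣ n)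
    (hd : k ^ 2 / 2 ≤ d) :
    (∃ Ψ : Cnf n, memPhi n k d Ψ ∧
      ∀ σ : Assignment n, satCnf σ Ψ → mTrue σ = n ∨ 2 * n / k ≤ nFalse σ) ∧
    (∃ Ψ : Cnf n, memPhi n k d Ψ ∧
      ∀ σ : Assignment n, satCnf σ Ψ → nFalse σ = n ∨ 2 * n / k ≤ mTrue σ) := by
  haveI : NeZero n := ⟨by omega⟩
  obtain ⟨h, hkh⟩ := hke
  have hk2 : k = 2 * h := by omega
  have hh2 : 2 ≤ h := by omega
  obtain ⟨s, hns⟩ := hdvd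
  have hn : n = s * h := by
    rw [hns, show k / 2 = h from by omega]
    ring
  have hs2 : 2 ≤ s := by
    by_contra hc
    push_neg at hc
    interval_cases s
    · simp at hn; omega
    · rw [one_mul] at hn; omega
  have hd2 : 2 * h * h ≤ d := by
    have he : k ^ 2 / 2 = 2 * h * h := by
      rw [pow_two, hk2, show 2 * h * (2 * h) = 2 * (2 * h * h) from by ring,
        Nat.mul_div_cancel_left _ (by norm_num)]
    omega
  have hgoal : 2 * n / k = s := by
    rw [show 2 * n = s * k from by rw [hn, hk2]; ring,
      Nat.mul_div_cancel _ (by omega : 0 < k)]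
  have main : ∃ Ψ : Cnf n, memPhi n k d Ψ ∧
      ∀ σ : Assignment n, satCnf σ Ψ → mTrue σ = n ∨ s ≤ nFalse σ := by
    rcases eq_or_lt_of_le hh2 with hh | hh
    · subst hh
      rw [show k = 4 from by omega]
      exact coreSmall n s d hn hs2 (by omega)
    · exact coreBig n k h s d (by omega) hk2 hn hs2 hd2
  obtain ⟨Ψ, hm, hp⟩ := main
  constructor
  · exact ⟨Ψ, hm, fun σ hσ => by rw [hgoal]; exact hp σ hσ⟩
  · refine ⟨Ψ.map flipClause, ⟨?_, ?_⟩, ?_⟩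
    · intro c hc
      rw [List.mem_map] at hc
      obtain ⟨c₀, hc₀, rfl⟩ := hc
      rw [clauseVars_flip]
      exact hm.1 c₀ hc₀
    · intro i
      rw [degree_flip]
      exact hm.2 i
    · intro σ hσ
      rw [satCnf_flip] at hσ
      rcases hp _ hσ with h1 | h1
      · left; rwa [mTrue_not] at h1
      · right; rw [hgoal]; rwa [nFalse_not] at h1
end

section
/- Let k ≥ 4 be an even integer and let n ≥ k be a multiple of k/2. If σ ≠ σ⁺ is an assignment satisfying Ψ₀, then for every ℓ ∈ {0,1,…,2n/k − 1}, σ assigns at least one variable in C_{ℓk/2} ∪ C_{(ℓ+1)k/2} to FALSE, and σ assigns at least 2n/k variables to FALSE in total. -/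
open Real Finset

attribute [local instance] Classical.propDecidable

/-- `m ∈ Ξ_i^π`, i.e. `m = π((i+j) mod n)` for some `0 ≤ j ≤ k/2 − 1`. -/
def inXi (n k : ℕ) (pp : Equiv.Perm (Fin n)) (i : ℕ) (m : Fin n) : Prop :=
  ∃ j < k / 2, ((pp.symm m : Fin n) : ℕ) = (i + j) % n

/-- The length-`k` clause `W^π_{i,ℓ} ∨ Π^π_{i+k/2}`: `x_ℓ` appears positively, all other
variables of `C_i^π` and all variables of `C_{i+k/2}^π` appear negatively. -/
noncomputable def gClause (n k : ℕ) (pp : Equiv.Perm (Fin n)) (i : ℕ) (ℓ : Fin n) : Clause n :=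
  fun m =>
    if m = ℓ then some true
    else if inXi n k pp i m ∨ inXi n k pp (i + k / 2) m then some false
    else none

/-- The formula `Ψ₀^π`, with clause set `{ W^π_{i,ℓ} ∨ Π^π_{i+k/2} : i ∈ N, ℓ ∈ Ξ_i^π }`. -/
noncomputable def Psi0 (n k : ℕ) (pp : Equiv.Perm (Fin n)) : Cnf n :=
  (List.range n).flatMap fun i =>
    (List.finRange n).filterMap fun ℓ =>
      if inXi n k pp i ℓ then some (gClause n k pp i ℓ) else none

/-! Auxiliary machinery for `stmt4`. -/

/-- The canonical representative of `a mod n` as an element of `Fin n`. -/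
def pos' (n : ℕ) (hn : 0 < n) (a : ℕ) : Fin n := ⟨a % n, Nat.mod_lt a hn⟩

lemma pos'_val {n : ℕ} (hn : 0 < n) (a : ℕ) : (pos' n hn a : ℕ) = a % n := rfl

lemma inXi_refl_iff {n k : ℕ} {i : ℕ} {m : Fin n} :
    inXi n k (Equiv.refl (Fin n)) i m ↔ ∃ j, j < k / 2 ∧ (m : ℕ) = (i + j) % n := by
  unfold inXi; simp

/-- Core SAT consequence: if `x_q` is false and all other variables of the window
`Ξ_i` are true, then some variable of `Ξ_{i+k/2}` is false. -/
lemma lemA {n k : ℕ} (hn : 0 < n) (σ : Assignment n)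
    (hsat : satCnf σ (Psi0 n k (Equiv.refl (Fin n))))
    (i : ℕ) (q : Fin n) (hq : inXi n k (Equiv.refl (Fin n)) i q)
    (hfq : σ q = false)
    (htrue : ∀ m : Fin n, inXi n k (Equiv.refl (Fin n)) i m → m ≠ q → σ m = true) :
    ∃ m : Fin n, inXi n k (Equiv.refl (Fin n)) (i + k / 2) m ∧ σ m = false := by
  have hq' : inXi n k (Equiv.refl (Fin n)) (i % n) q := by
    rw [inXi_refl_iff] at hq ⊢
    obtain ⟨j, hj, hje⟩ := hq
    exact ⟨j, hj, by rw [hje, Nat.mod_add_mod]⟩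
  have hmem : gClause n k (Equiv.refl (Fin n)) (i % n) q ∈ Psi0 n k (Equiv.refl (Fin n)) := by
    unfold Psi0
    rw [List.mem_flatMap]
    refine ⟨i % n, List.mem_range.mpr (Nat.mod_lt _ hn), ?_⟩
    rw [List.mem_filterMap]
    exact ⟨q, List.mem_finRange q, by rw [if_pos hq']⟩
  obtain ⟨m, hm⟩ := hsat _ hmem
  unfold gClause at hm
  by_cases h1 : m = q
  · rw [if_pos h1] at hm
    subst h1
    injection hm with hmm
    rw [← hmm] at hfq
    exact absurd hfq (by simp)
  · rw [if_neg h1] at hm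
    by_cases h2 : inXi n k (Equiv.refl (Fin n)) (i % n) m ∨
        inXi n k (Equiv.refl (Fin n)) (i % n + k / 2) m
    · rw [if_pos h2] at hm
      injection hm with hmm
      have hmf : σ m = false := hmm.symm
      rcases h2 with h2 | h2
      · have h2' : inXi n k (Equiv.refl (Fin n)) i m := by
          rw [inXi_refl_iff] at h2 ⊢
          obtain ⟨j, hj, hje⟩ := h2
          exact ⟨j, hj, by rw [hje, Nat.mod_add_mod]⟩
        have := htrue m h2' h1
        rw [hmf] at this
        exact absurd this (by simp)
      · refine ⟨m, ?_, hmf⟩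
        rw [inXi_refl_iff] at h2 ⊢
        obtain ⟨j, hj, hje⟩ := h2
        refine ⟨j, hj, ?_⟩
        rw [hje, add_assoc, Nat.mod_add_mod, ← add_assoc]
    · rw [if_neg h2] at hm
      exact absurd hm (by simp)

/-- Relative-coordinate version of `lemA`, around a base point `p₀`. -/
lemma lemA' {n k : ℕ} (hn : 0 < n) (σ : Assignment n)
    (hsat : satCnf σ (Psi0 n k (Equiv.refl (Fin n)))) (p₀ : Fin n)
    (b q : ℕ) (hbq : b ≤ q) (hqb : q < b + k / 2)
    (hfq : σ (pos' n hn ((p₀ : ℕ) + q)) = false)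
    (htrue : ∀ s, b ≤ s → s < b + k / 2 → s ≠ q → ¬ σ (pos' n hn ((p₀ : ℕ) + s)) = false) :
    ∃ s, b + k / 2 ≤ s ∧ s < b + 2 * (k / 2) ∧ σ (pos' n hn ((p₀ : ℕ) + s)) = false := by
  have hq : inXi n k (Equiv.refl (Fin n)) ((p₀ : ℕ) + b) (pos' n hn ((p₀ : ℕ) + q)) := by
    rw [inXi_refl_iff]
    exact ⟨q - b, by omega, by rw [pos'_val]; congr 1; omega⟩
  have htr : ∀ m' : Fin n, inXi n k (Equiv.refl (Fin n)) ((p₀ : ℕ) + b) m' →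
      m' ≠ pos' n hn ((p₀ : ℕ) + q) → σ m' = true := by
    intro m' hm' hne'
    rw [inXi_refl_iff] at hm'
    obtain ⟨j, hj, hmj⟩ := hm'
    have hmeq : m' = pos' n hn ((p₀ : ℕ) + (b + j)) := by
      apply Fin.ext
      rw [pos'_val, hmj]
      congr 1
      omega
    by_cases hsq : b + j = q
    · exact absurd (by rw [hmeq, hsq]) hne'
    · have hnf := htrue (b + j) (by omega) (by omega) hsq
      rw [hmeq]
      cases hb : σ (pos' n hn ((p₀ : ℕ) + (b + j)))
      · exact absurd hb hnf
      · rfl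
  obtain ⟨m, hm1, hm2⟩ :=
    lemA hn σ hsat ((p₀ : ℕ) + b) (pos' n hn ((p₀ : ℕ) + q)) hq hfq htr
  rw [inXi_refl_iff] at hm1
  obtain ⟨j, hj, hmj⟩ := hm1
  refine ⟨b + k / 2 + j, by omega, by omega, ?_⟩
  have he : pos' n hn ((p₀ : ℕ) + (b + k / 2 + j)) = m := by
    apply Fin.ext
    rw [pos'_val, hmj]
    congr 1
    omega
  rwa [he]

/-- The least `s > t` with `F s`. -/
noncomputable def nxtF (F : ℕ → Prop) (hub : ∀ t, ∃ s, t < s ∧ F s) : ℕ → ℕ :=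
  fun t => Nat.find (hub t)

lemma nxtF_spec (F : ℕ → Prop) (hub : ∀ t, ∃ s, t < s ∧ F s) (t : ℕ) :
    t < nxtF F hub t ∧ F (nxtF F hub t) := Nat.find_spec (hub t)

lemma nxtF_min (F : ℕ → Prop) (hub : ∀ t, ∃ s, t < s ∧ F s) (t s : ℕ)
    (h1 : t < s) (h2 : s < nxtF F hub t) : ¬ F s :=
  fun hF => Nat.find_min (hub t) h2 ⟨h1, hF⟩

lemma nxtF_le (F : ℕ → Prop) (hub : ∀ t, ∃ s, t < s ∧ F s) (t s : ℕ)
    (h1 : t < s) (h2 : F s) : nxtF F hub t ≤ s := Nat.find_le ⟨h1, h2⟩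

/-- Abstract combinatorial core: from the window-step property we get a sequence of
"false" positions starting at `0`, growing slowly (`u j ≤ h j + h − 1`) and densely
(every point is within `2h−2` of some `u j`). -/
lemma lemSeq (h : ℕ) (hh : 1 ≤ h) (F : ℕ → Prop)
    (hF0 : F 0) (hub : ∀ t, ∃ s, t < s ∧ F s)
    (hstep : ∀ b q, b ≤ q → q < b + h → F q →
      (∀ s, b ≤ s → s < b + h → s ≠ q → ¬ F s) →
      ∃ s, b + h ≤ s ∧ s < b + 2 * h ∧ F s) :
    ∃ u : ℕ → ℕ, u 0 = 0 ∧ (∀ j, F (u j)) ∧ (∀ j, u j < u (j + 1)) ∧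
      (∀ j, u j ≤ h * j + (h - 1)) ∧
      (∀ s, ∃ j, s ≤ u j ∧ u j ≤ s + (2 * h - 2)) := by
  classical
  have hB1 : ∀ t, F t → ∃ s, t < s ∧ s ≤ t + (2 * h - 1) ∧ F s := by
    intro t ht
    by_cases hex : ∃ s, t < s ∧ s < t + h ∧ F s
    · obtain ⟨s, h1, h2, h3⟩ := hex
      exact ⟨s, h1, by omega, h3⟩
    · push_neg at hex
      obtain ⟨s, h1, h2, h3⟩ := hstep t t le_rfl (by omega) ht
        (fun s hs1 hs2 hs3 => hex s (by omega) hs2)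
      exact ⟨s, by omega, by omega, h3⟩
  have hC : ∀ t q, t < q → F q → (∀ s, t < s → s < q → ¬ F s) →
      ∃ s, q < s ∧ s ≤ max (q + h) (t + 2 * h) ∧ F s := by
    intro t q htq hq hmin
    by_cases hg : t + h ≤ q
    · obtain ⟨s, h1, h2, h3⟩ := hstep (q + 1 - h) q (by omega) (by omega) hq
        (fun s hs1 hs2 hs3 => hmin s (by omega) (by omega))
      exact ⟨s, by omega, le_trans (by omega) (le_max_left _ _), h3⟩
    · by_cases hex : ∃ s, q < s ∧ s ≤ t + h ∧ F s
      · obtain ⟨s, h1, h2, h3⟩ := hex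
        exact ⟨s, h1, le_trans (by omega) (le_max_right _ _), h3⟩
      · push_neg at hex
        have htr : ∀ s, t + 1 ≤ s → s < t + 1 + h → s ≠ q → ¬ F s := by
          intro s hs1 hs2 hs3
          rcases Nat.lt_or_ge s q with hlt | hge
          · exact hmin s (by omega) hlt
          · exact hex s (by omega) (by omega)
        obtain ⟨s, h1, h2, h3⟩ := hstep (t + 1) q (by omega) (by omega) hq htr
        exact ⟨s, by omega, le_trans (by omega) (le_max_right _ _), h3⟩
  let u : ℕ → ℕ := fun j => Nat.rec 0 (fun _ ih => nxtF F hub ih) j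
  have hu0 : u 0 = 0 := rfl
  have husucc : ∀ j, u (j + 1) = nxtF F hub (u j) := fun _ => rfl
  have huF : ∀ j, F (u j) := by
    intro j
    cases j with
    | zero => exact hF0
    | succ j => rw [husucc]; exact (nxtF_spec F hub (u j)).2
  have humono : ∀ j, u j < u (j + 1) := by
    intro j; rw [husucc]; exact (nxtF_spec F hub (u j)).1
  have humin : ∀ j s, u j < s → s < u (j + 1) → ¬ F s := by
    intro j s h1 h2
    rw [husucc] at h2
    exact nxtF_min F hub (u j) s h1 h2
  have hle_next : ∀ j s, u j < s → F s → u (j + 1) ≤ s := by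
    intro j s h1 h2
    rw [husucc]
    exact nxtF_le F hub (u j) s h1 h2
  have hstep1 : ∀ j, u (j + 1) ≤ u j + (2 * h - 1) := by
    intro j
    obtain ⟨s, h1, h2, h3⟩ := hB1 (u j) (huF j)
    exact le_trans (hle_next j s h1 h3) h2
  have hstep2 : ∀ j, u (j + 1 + 1) ≤ max (u (j + 1) + h) (u j + 2 * h) := by
    intro j
    obtain ⟨s, h1, h2, h3⟩ := hC (u j) (u (j + 1)) (humono j) (huF (j + 1)) (humin j)
    exact le_trans (hle_next (j + 1) s h1 h3) h2
  have hQ : ∀ j, u (j + 1) ≤ h * j + 2 * h - 1 ∧ u j + h ≤ h * j + 2 * h - 1 := by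
    intro j
    induction j with
    | zero =>
      have h1 := hstep1 0
      rw [hu0] at h1
      rw [hu0]
      constructor <;> omega
    | succ j ih =>
      have h2 := hstep2 j
      have h2' : u (j + 1 + 1) ≤ u (j + 1) + h ∨ u (j + 1 + 1) ≤ u j + 2 * h :=
        le_max_iff.mp h2
      have hmul : h * (j + 1) = h * j + h := by ring
      obtain ⟨a, ha⟩ : ∃ a, a = h * j := ⟨_, rfl⟩
      rw [← ha] at ih
      rw [hmul, ← ha]
      rcases h2' with h2' | h2' <;> constructor <;> omega
  have huLe : ∀ j, u j ≤ h * j + (h - 1) := by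
    intro j
    cases j with
    | zero => rw [hu0]; simp only [Nat.mul_zero]; omega
    | succ j =>
      have h1 := (hQ j).1
      have hmul : h * (j + 1) = h * j + h := by ring
      obtain ⟨a, ha⟩ : ∃ a, a = h * j := ⟨_, rfl⟩
      rw [← ha] at h1
      rw [hmul, ← ha]
      omega
  have hdens : ∀ s, ∃ j, s ≤ u j ∧ u j ≤ s + (2 * h - 2) := by
    intro s
    induction s with
    | zero => exact ⟨0, by rw [hu0], by rw [hu0]; omega⟩
    | succ s ih =>
      obtain ⟨j, hj1, hj2⟩ := ih
      rcases Nat.lt_or_ge s (u j) with hlt | hge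
      · exact ⟨j, by omega, by omega⟩
      · have h1 := humono j
        have h2 := hstep1 j
        exact ⟨j + 1, by omega, by omega⟩
  exact ⟨u, hu0, huF, humono, huLe, hdens⟩
/-- if `σ ≠ σ⁺` satisfies `Ψ₀`, then for every `ℓ ∈ {0,…,2n/k−1}` some variable
of `C_{ℓk/2} ∪ C_{(ℓ+1)k/2}` is FALSE under `σ`, and `σ` has at least `2n/k` FALSEs. -/
theorem stmt4 (k n : ℕ) (hk4 : 4 ≤ k) (hke : Even k) (hkn : k ≤ n) (hdvd : k / 2 ∣ n)
    (σ : Assignment n) (hsat : satCnf σ (Psi0 n k (Equiv.refl (Fin n))))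
    (hne : σ ≠ fun _ => true) :
    (∀ ℓ < 2 * n / k, ∃ m : Fin n,
      (inXi n k (Equiv.refl (Fin n)) (ℓ * (k / 2)) m ∨
        inXi n k (Equiv.refl (Fin n)) ((ℓ + 1) * (k / 2)) m) ∧ σ m = false) ∧
    2 * n / k ≤ nFalse σ := by
  have hn : 0 < n := by omega
  obtain ⟨c, hc⟩ := hke
  have hk2 : k = 2 * (k / 2) := by omega
  have hh2 : 2 ≤ k / 2 := by omega
  -- a false variable exists
  have hp : ∃ p : Fin n, σ p = false := by
    by_contra hcon
    push_neg at hcon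
    apply hne
    funext p
    cases hb : σ p
    · exact absurd hb (hcon p)
    · rfl
  obtain ⟨p₀, hp₀⟩ := hp
  -- instantiate the abstract sequence lemma
  have hF0 : σ (pos' n hn ((p₀ : ℕ) + 0)) = false := by
    have he : pos' n hn ((p₀ : ℕ) + 0) = p₀ := by
      apply Fin.ext
      rw [pos'_val, Nat.add_zero, Nat.mod_eq_of_lt p₀.isLt]
    rwa [he]
  have hub : ∀ t, ∃ s, t < s ∧ σ (pos' n hn ((p₀ : ℕ) + s)) = false := by
    intro t
    refine ⟨n * (t + 1), ?_, ?_⟩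
    · exact lt_of_lt_of_le (Nat.lt_succ_self t) (Nat.le_mul_of_pos_left (t + 1) hn)
    · have he : pos' n hn ((p₀ : ℕ) + n * (t + 1)) = p₀ := by
        apply Fin.ext
        rw [pos'_val, Nat.add_mul_mod_self_left, Nat.mod_eq_of_lt p₀.isLt]
      rwa [he]
  obtain ⟨u, hu0, huF, humono, huLe, hudens⟩ :=
    lemSeq (k / 2) (by omega) (fun s => σ (pos' n hn ((p₀ : ℕ) + s)) = false)
      hF0 hub (fun b q h1 h2 h3 h4 => lemA' hn σ hsat p₀ b q h1 h2 h3 h4)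
  have h2nk : 2 * n / k = n / (k / 2) := by
    conv_lhs => rw [hk2]
    exact Nat.mul_div_mul_left n (k / 2) (by norm_num)
  constructor
  · -- part 1
    intro ℓ _
    obtain ⟨a, ha⟩ : ∃ a, ℓ * (k / 2) = a := ⟨_, rfl⟩
    obtain ⟨j, hj1, hj2⟩ := hudens (a + (n - (p₀ : ℕ)))
    refine ⟨pos' n hn ((p₀ : ℕ) + u j), ?_, huF j⟩
    obtain ⟨d, hd⟩ : ∃ d, d = u j - (a + (n - (p₀ : ℕ))) := ⟨_, rfl⟩
    have hlt := p₀.isLt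
    have hpval : ((p₀ : ℕ) + u j) % n = (a + d) % n := by
      have he : (p₀ : ℕ) + u j = (a + d) + n := by omega
      rw [he, Nat.add_mod_right]
    have hd2 : d ≤ 2 * (k / 2) - 2 := by omega
    by_cases hcase : d < k / 2
    · left
      rw [inXi_refl_iff, ha]
      exact ⟨d, hcase, by rw [pos'_val, hpval]⟩
    · right
      rw [inXi_refl_iff]
      have hb : (ℓ + 1) * (k / 2) = a + k / 2 := by rw [← ha]; ring
      rw [hb]
      refine ⟨d - k / 2, by omega, ?_⟩
      rw [pos'_val, hpval]
      congr 1
      omega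
  · -- part 2
    rw [h2nk]
    unfold nFalse
    have hult : ∀ j, j < n / (k / 2) → u j < n := by
      intro j hj
      have h1 := huLe j
      have h2 : (k / 2) * (j + 1) ≤ (k / 2) * (n / (k / 2)) := Nat.mul_le_mul_left _ hj
      rw [Nat.mul_succ, Nat.mul_div_cancel' hdvd] at h2
      obtain ⟨a, ha⟩ : ∃ a, a = k / 2 * j := ⟨_, rfl⟩
      rw [← ha] at h1 h2
      omega
    have hcard : (Finset.range (n / (k / 2))).card ≤
        (Finset.univ.filter (fun i => σ i = false)).card := by
      apply Finset.card_le_card_of_injOn (fun j => pos' n hn ((p₀ : ℕ) + u j))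
      · intro j _
        simp only [Finset.mem_coe, Finset.mem_filter, Finset.mem_univ, true_and]
        exact huF j
      · intro j hj j' hj' heq
        simp only [Finset.coe_range, Set.mem_Iio] at hj hj'
        have hval : ((p₀ : ℕ) + u j) % n = ((p₀ : ℕ) + u j') % n := by
          have := congrArg Fin.val heq
          rwa [pos'_val, pos'_val] at this
        have hme : u j ≡ u j' [MOD n] := Nat.ModEq.add_left_cancel' (p₀ : ℕ) hval
        have huj : u j = u j' := by
          have e1 : u j % n = u j' % n := hme
          rw [Nat.mod_eq_of_lt (hult j hj), Nat.mod_eq_of_lt (hult j' hj')] at e1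
          exact e1
        exact (strictMono_nat_of_lt_succ humono).injective huj
    simpa using hcard
end

section
/- Let k ≥ 4 be an even integer and let n ≥ k be a multiple of k/2. Suppose σ ≠ σ⁺ satisfies Ψ₀ and σ assigns some variable x_a with a ∈ Ξ_{ℓk/2} to FALSE. Then either (1) σ assigns some variable of C_{(ℓ+1)k/2} to FALSE, or (2) all variables in C_{(ℓ+1)k/2} are assigned TRUE by σ, and there exist variables x_c ∈ C_{(ℓ+2)k/2} and x_d ∈ C_{ℓk/2} \ {x_a} that are assigned FALSE by σ. -/
open Real Finset

attribute [local instance] Classical.propDecidable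

/-- the Claim: if `σ ≠ σ⁺` satisfies `Ψ₀` and `σ` assigns `x_a` with
`a ∈ Ξ_{ℓk/2}` to FALSE, then either some variable of `C_{(ℓ+1)k/2}` is FALSE under `σ`,
or all variables of `C_{(ℓ+1)k/2}` are TRUE and there are `x_c ∈ C_{(ℓ+2)k/2}` and
`x_d ∈ C_{ℓk/2} \ {x_a}` assigned FALSE by `σ`. -/
theorem stmt5 (k n : ℕ) (hk4 : 4 ≤ k) (hke : Even k) (hkn : k ≤ n) (hdvd : k / 2 ∣ n)
    (σ : Assignment n) (hsat : satCnf σ (Psi0 n k (Equiv.refl (Fin n))))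
    (hne : σ ≠ fun _ => true)
    (ℓ : ℕ) (a : Fin n) (ha : inXi n k (Equiv.refl (Fin n)) (ℓ * (k / 2)) a)
    (haF : σ a = false) :
    (∃ b : Fin n, inXi n k (Equiv.refl (Fin n)) ((ℓ + 1) * (k / 2)) b ∧ σ b = false) ∨
    ((∀ m : Fin n, inXi n k (Equiv.refl (Fin n)) ((ℓ + 1) * (k / 2)) m → σ m = true) ∧
      (∃ c : Fin n, inXi n k (Equiv.refl (Fin n)) ((ℓ + 2) * (k / 2)) c ∧ σ c = false) ∧
      (∃ d : Fin n, inXi n k (Equiv.refl (Fin n)) (ℓ * (k / 2)) d ∧ d ≠ a ∧ σ d = false)) :=  by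
  classical
  have hn0 : 0 < n := by omega
  have hh1 : 1 ≤ k / 2 := by omega
  have hXi : ∀ (i : ℕ) (m : Fin n), inXi n k (Equiv.refl (Fin n)) i m ↔
      ∃ j, j < k / 2 ∧ (m : ℕ) = (i + j) % n := by
    intro i m
    simp [inXi]
  have hcongr : ∀ (i i' : ℕ) (m : Fin n), i % n = i' % n →
      inXi n k (Equiv.refl (Fin n)) i m → inXi n k (Equiv.refl (Fin n)) i' m := by
    intro i i' m hii hm
    rw [hXi] at hm ⊢
    obtain ⟨j, hj, hm⟩ := hm
    exact ⟨j, hj, by rw [hm, Nat.add_mod, hii, ← Nat.add_mod]⟩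
  have hmem : ∀ (i : ℕ) (l : Fin n), i < n → inXi n k (Equiv.refl (Fin n)) i l →
      gClause n k (Equiv.refl (Fin n)) i l ∈ Psi0 n k (Equiv.refl (Fin n)) := by
    intro i l hi hx
    simp only [Psi0, List.mem_flatMap, List.mem_range, List.mem_filterMap, List.mem_finRange]
    exact ⟨i, hi, l, trivial, by rw [if_pos hx]⟩
  by_cases hB1 : ∃ b : Fin n, inXi n k (Equiv.refl (Fin n)) ((ℓ + 1) * (k / 2)) b ∧ σ b = false
  · exact Or.inl hB1
  push_neg at hB1
  have hB1' : ∀ m : Fin n, inXi n k (Equiv.refl (Fin n)) ((ℓ + 1) * (k / 2)) m → σ m = true := by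
    intro m hm
    simpa using hB1 m hm
  -- existence of d
  have hamem : inXi n k (Equiv.refl (Fin n)) (ℓ * (k / 2) % n) a :=
    hcongr _ _ _ (Nat.mod_mod_of_dvd _ dvd_rfl).symm ha
  have hd : ∃ d : Fin n, inXi n k (Equiv.refl (Fin n)) (ℓ * (k / 2)) d ∧ d ≠ a ∧ σ d = false := by
    obtain ⟨i, hw⟩ := hsat _ (hmem (ℓ * (k / 2) % n) a (Nat.mod_lt _ hn0) hamem)
    simp only [gClause] at hw
    split_ifs at hw with h1 h2
    · rw [h1, haF] at hw
      simp at hw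
    · have hif : σ i = false := (Option.some.inj hw).symm
      rcases h2 with h2 | h2
      · exact ⟨i, hcongr _ _ _ (Nat.mod_mod_of_dvd _ dvd_rfl) h2, h1, hif⟩
      · have hx : inXi n k (Equiv.refl (Fin n)) ((ℓ + 1) * (k / 2)) i := by
          apply hcongr _ _ _ ?_ h2
          rw [Nat.mod_add_mod]
          congr 1
          ring
        rw [hB1' i hx] at hif
        cases hif
  refine Or.inr ⟨hB1', ?_, hd⟩
  by_contra hc
  push_neg at hc
  have hB2' : ∀ m : Fin n, inXi n k (Equiv.refl (Fin n)) ((ℓ + 2) * (k / 2)) m → σ m = true := by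
    intro m hm
    simpa using hc m hm
  obtain ⟨ta, hta, haeq⟩ := (hXi _ a).mp ha
  have hkey : ∃ t, t < k / 2 ∧ σ ⟨(ℓ * (k / 2) + t) % n, Nat.mod_lt _ hn0⟩ = false ∧
      ∀ t', t < t' → t' < k / 2 → σ ⟨(ℓ * (k / 2) + t') % n, Nat.mod_lt _ hn0⟩ = true := by
    have hTne : ((Finset.range (k / 2)).filter
        (fun t => σ ⟨(ℓ * (k / 2) + t) % n, Nat.mod_lt _ hn0⟩ = false)).Nonempty := by
      refine ⟨ta, Finset.mem_filter.mpr ⟨Finset.mem_range.mpr hta, ?_⟩⟩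
      have hfa : (⟨(ℓ * (k / 2) + ta) % n, Nat.mod_lt _ hn0⟩ : Fin n) = a := Fin.ext haeq.symm
      rw [hfa]
      exact haF
    have htmem := Finset.max'_mem _ hTne
    rw [Finset.mem_filter, Finset.mem_range] at htmem
    refine ⟨Finset.max' _ hTne, htmem.1, htmem.2, ?_⟩
    intro t' h1 h2
    by_contra hb
    have hmem' : t' ∈ (Finset.range (k / 2)).filter
        (fun t => σ ⟨(ℓ * (k / 2) + t) % n, Nat.mod_lt _ hn0⟩ = false) :=
      Finset.mem_filter.mpr ⟨Finset.mem_range.mpr h2, by simpa using hb⟩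
    have := Finset.le_max' _ t' hmem'
    omega
  obtain ⟨t, htk, htF, hmax⟩ := hkey
  set a0 : Fin n := ⟨(ℓ * (k / 2) + t) % n, Nat.mod_lt _ hn0⟩ with ha0
  have ha0v : (a0 : ℕ) = (ℓ * (k / 2) + t) % n := rfl
  have ha0x : inXi n k (Equiv.refl (Fin n)) (a0 : ℕ) a0 := by
    rw [hXi]
    exact ⟨0, by omega, by rw [Nat.add_zero, Nat.mod_eq_of_lt a0.isLt]⟩
  obtain ⟨i, hw⟩ := hsat _ (hmem (a0 : ℕ) a0 a0.isLt ha0x)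
  simp only [gClause] at hw
  split_ifs at hw with h1 h2
  · rw [h1] at hw
    have : σ a0 = true := (Option.some.inj hw).symm
    rw [htF] at this
    cases this
  · have hif : σ i = false := (Option.some.inj hw).symm
    have hit : σ i = true := by
      rcases h2 with h2 | h2
      · rw [hXi] at h2
        obtain ⟨j, hj, hij⟩ := h2
        have hij' : (i : ℕ) = (ℓ * (k / 2) + t + j) % n := by
          rw [hij]
          exact Nat.mod_add_mod ..
        have hj0 : j ≠ 0 := by
          intro hj0
          apply h1
          apply Fin.ext
          rw [hij, hj0, Nat.add_zero, Nat.mod_eq_of_lt a0.isLt]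
        by_cases hcase : t + j < k / 2
        · have hieq : i = ⟨(ℓ * (k / 2) + (t + j)) % n, Nat.mod_lt _ hn0⟩ := by
            apply Fin.ext
            rw [hij']
            congr 1
            omega
          rw [hieq]
          exact hmax (t + j) (by omega) hcase
        · apply hB1'
          rw [hXi]
          refine ⟨t + j - k / 2, by omega, ?_⟩
          rw [hij']
          congr 1
          have : (ℓ + 1) * (k / 2) = ℓ * (k / 2) + k / 2 := by ring
          omega
      · rw [hXi] at h2
        obtain ⟨j, hj, hij⟩ := h2
        have hij' : (i : ℕ) = (ℓ * (k / 2) + t + (k / 2 + j)) % n := by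
          rw [hij, Nat.add_assoc]
          exact Nat.mod_add_mod ..
        by_cases hcase : t + j < k / 2
        · apply hB1'
          rw [hXi]
          refine ⟨t + j, hcase, ?_⟩
          rw [hij']
          congr 1
          have : (ℓ + 1) * (k / 2) = ℓ * (k / 2) + k / 2 := by ring
          omega
        · apply hB2'
          rw [hXi]
          refine ⟨t + j - k / 2, by omega, ?_⟩
          rw [hij']
          congr 1
          have : (ℓ + 2) * (k / 2) = ℓ * (k / 2) + (k / 2 + k / 2) := by ring
          omega
    rw [hit] at hif
    cases hif
end

section
/- Let k ≥ 4 be an even integer, let n ≥ k be a multiple of k/2, and let π be a permutation of N = {0,…,n−1}. If σ ≠ σ⁺ is an assignment satisfying Ψ₀^π, then there exists a subset M ⊆ {0,1,…,2n/k − 1} of size at least n/k such that for every ℓ ∈ M, σ assigns at least one variable of C^π_{ℓk/2} to FALSE. -/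
open Real Finset

attribute [local instance] Classical.propDecidable

lemma window_lemma (n k : ℕ) (hk : 0 < k / 2) (hn : 0 < n) (pp : Equiv.Perm (Fin n))
    (σ : Assignment n) (hsat : satCnf σ (Psi0 n k pp)) (p : Fin n) (hp : σ (pp p) = false) :
    ∃ j, 1 ≤ j ∧ j < k / 2 + k / 2 ∧ σ (pp ⟨(p.val + j) % n, Nat.mod_lt _ hn⟩) = false := by
  have hiX : inXi n k pp p.val (pp p) := ⟨0, hk, by simp [Nat.mod_eq_of_lt p.isLt]⟩
  have hc : gClause n k pp p.val (pp p) ∈ Psi0 n k pp := by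
    unfold Psi0
    rw [List.mem_flatMap]
    refine ⟨p.val, List.mem_range.2 p.isLt, ?_⟩
    rw [List.mem_filterMap]
    exact ⟨pp p, List.mem_finRange _, by rw [if_pos hiX]⟩
  obtain ⟨m, hm⟩ := hsat _ hc
  simp only [gClause] at hm
  by_cases hmp : m = pp p
  · rw [if_pos hmp] at hm
    rw [hmp, hp] at hm; exact absurd hm (by simp)
  rw [if_neg hmp] at hm
  by_cases hin : inXi n k pp p.val m ∨ inXi n k pp (p.val + k / 2) m
  · rw [if_pos hin] at hm
    have hmf : σ m = false := by
      have := hm.symm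
      simpa using this
    rcases hin with ⟨j, hj, hje⟩ | ⟨j, hj, hje⟩
    · have hmm : m = pp ⟨(p.val + j) % n, Nat.mod_lt _ hn⟩ := by
        have h1 : pp.symm m = ⟨(p.val + j) % n, Nat.mod_lt _ hn⟩ := Fin.ext hje
        rw [← h1]; simp
      have hj1 : 1 ≤ j := by
        rcases Nat.eq_zero_or_pos j with rfl | h
        · exfalso; apply hmp
          have h1 : pp.symm m = p := Fin.ext (by simpa [Nat.mod_eq_of_lt p.isLt] using hje)
          rw [← h1]; simp
        · exact h
      exact ⟨j, hj1, by omega, by rw [← hmm]; exact hmf⟩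
    · have hmm : m = pp ⟨(p.val + (k / 2 + j)) % n, Nat.mod_lt _ hn⟩ := by
        have h1 : pp.symm m = ⟨(p.val + (k / 2 + j)) % n, Nat.mod_lt _ hn⟩ :=
          Fin.ext (by rw [hje, Nat.add_assoc])
        rw [← h1]; simp
      exact ⟨k / 2 + j, by omega, by omega, by rw [← hmm]; exact hmf⟩
  · rw [if_neg hin] at hm; exact absurd hm (by simp)

lemma blk_aux1 (n s x : ℕ) (hs : s ≤ n) (hx : x < n) : (s + (x + n - s) % n) % n = x := by
  rw [Nat.add_mod_mod]
  have h1 : s + (x + n - s) = x + n := by omega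
  rw [h1, Nat.add_mod_right]
  exact Nat.mod_eq_of_lt hx

lemma blk_aux2 (n s x j : ℕ) (hs : s ≤ n) :
    ((x + j) % n + n - s) % n = ((x + n - s) % n + j) % n := by
  have e1 : (x + j) % n + n - s = (x + j) % n + (n - s) := by omega
  have e2 : x + n - s = x + (n - s) := by omega
  rw [e1, e2, Nat.mod_add_mod, Nat.mod_add_mod]
  congr 1; omega

/-- if `σ ≠ σ⁺` satisfies `Ψ₀^π`, then there is a set
`M ⊆ {0,…,2n/k−1}` of size at least `n/k` such that for each `ℓ ∈ M`, some variable of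
`C^π_{ℓk/2}` is assigned FALSE by `σ`. -/
theorem stmt6 (k n : ℕ) (hk4 : 4 ≤ k) (hke : Even k) (hkn : k ≤ n) (hdvd : k / 2 ∣ n)
    (pp : Equiv.Perm (Fin n))
    (σ : Assignment n) (hsat : satCnf σ (Psi0 n k pp)) (hne : σ ≠ fun _ => true) :
    ∃ M : Finset ℕ, M ⊆ Finset.range (2 * n / k) ∧ (n : ℝ) / (k : ℝ) ≤ (M.card : ℝ) ∧
      ∀ ℓ ∈ M, ∃ m : Fin n, inXi n k pp (ℓ * (k / 2)) m ∧ σ m = false := by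
  classical
  obtain ⟨B, hB⟩ := hdvd
  set h := k / 2 with hh
  have hk2 : k = 2 * h := by obtain ⟨t, ht⟩ := hke; omega
  have h2 : 2 ≤ h := by omega
  have hn0 : 0 < n := by omega
  have hB2 : 2 ≤ B := by
    by_contra hb
    interval_cases B <;> omega
  have hBk : 2 * n / k = B := by
    rw [hB, hk2, show 2 * (h * B) = B * (2 * h) by ring]
    exact Nat.mul_div_cancel _ (by omega)
  have bool_tt : ∀ b : Bool, b ≠ false → b = true := by decide
  set P : ℕ → Prop := fun ℓ => ∃ m, inXi n k pp (ℓ * h) m ∧ σ m = false with hP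
  -- get one false variable
  have hex : ∃ m, σ m = false := by
    by_contra hc
    push_neg at hc
    exact hne (funext fun i => bool_tt _ (hc i))
  -- key lemma: no two adjacent all-true blocks
  have key : ∀ ℓ < B, P ℓ ∨ P ((ℓ + 1) % B) := by
    intro ℓ hℓ
    by_contra hcon
    push_neg at hcon
    obtain ⟨hPl, hPl'⟩ := hcon
    simp only [hP] at hPl hPl'
    push_neg at hPl hPl'
    set ℓ' := (ℓ + 1) % B with hℓ'
    have hsn : ℓ * h + h ≤ n := by
      have h1 : (ℓ + 1) * h ≤ B * h := Nat.mul_le_mul_right h hℓ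
      calc ℓ * h + h = (ℓ + 1) * h := by ring
        _ ≤ B * h := h1
        _ = n := by rw [hB]; ring
    have hme : (ℓ' * h) % n = ((ℓ + 1) * h) % n := by
      have hBh : B * h = n := by rw [hB]; ring
      have := (Nat.mod_modEq (ℓ + 1) B).mul_right' (c := h)
      rwa [hBh] at this
    have htrue : ∀ j < 2 * h, σ (pp ⟨(ℓ * h + j) % n, Nat.mod_lt _ hn0⟩) = true := by
      intro j hj
      by_cases hjh : j < h
      · refine bool_tt _ (hPl _ ⟨j, hjh, by simp⟩)
      · push_neg at hjh
        obtain ⟨d, rfl⟩ : ∃ d, j = h + d := ⟨j - h, by omega⟩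
        refine bool_tt _ (hPl' _ ⟨d, by omega, ?_⟩)
        simp only [Equiv.symm_apply_apply]
        show ((ℓ * h + (h + d)) % n : ℕ) = (ℓ' * h + d) % n
        rw [Nat.add_mod (ℓ' * h), hme, ← Nat.add_mod]
        congr 1; ring
    have eB : ∀ p : Fin n, σ (pp p) = false → 2 * h ≤ (p.val + n - ℓ * h) % n := by
      intro p hpf
      by_contra hlt
      push_neg at hlt
      have h1 := htrue _ hlt
      have h2' : (⟨(ℓ * h + (p.val + n - ℓ * h) % n) % n, Nat.mod_lt _ hn0⟩ : Fin n) = p :=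
        Fin.ext (blk_aux1 n (ℓ * h) p.val (by omega) p.isLt)
      rw [h2', hpf] at h1
      exact absurd h1 (by simp)
    have desc : ∀ D, ∀ p : Fin n, σ (pp p) = false →
        n - (p.val + n - ℓ * h) % n ≤ D → False := by
      intro D
      induction D with
      | zero =>
        intro p hpf hle
        have h1 : (p.val + n - ℓ * h) % n < n := Nat.mod_lt _ hn0
        omega
      | succ D ih =>
        intro p hpf hle
        obtain ⟨j, hj1, hj2, hq⟩ := window_lemma n k (by omega) hn0 pp σ hsat p hpf
        set q : Fin n := ⟨(p.val + j) % n, Nat.mod_lt _ hn0⟩ with hqdef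
        have heq : (q.val + n - ℓ * h) % n = ((p.val + n - ℓ * h) % n + j) % n :=
          blk_aux2 n (ℓ * h) p.val j (by omega)
        have hep : 2 * h ≤ (p.val + n - ℓ * h) % n := eB p hpf
        have heq2 : 2 * h ≤ (q.val + n - ℓ * h) % n := eB q hq
        have hp_lt : (p.val + n - ℓ * h) % n < n := Nat.mod_lt _ hn0
        by_cases hw : (p.val + n - ℓ * h) % n + j < n
        · have h3 : (q.val + n - ℓ * h) % n = (p.val + n - ℓ * h) % n + j := by
            rw [heq, Nat.mod_eq_of_lt hw]
          exact ih q hq (by omega)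
        · push_neg at hw
          have h3 : (q.val + n - ℓ * h) % n = (p.val + n - ℓ * h) % n + j - n := by
            rw [heq, Nat.mod_eq_sub_mod hw, Nat.mod_eq_of_lt (by omega)]
          omega
    obtain ⟨m0, hm0⟩ := hex
    exact desc n (pp.symm m0) (by simpa using hm0) (by omega)
  -- counting
  refine ⟨(Finset.range B).filter P, ?_, ?_, ?_⟩
  · rw [hBk]; exact Finset.filter_subset _ _
  · set M := (Finset.range B).filter P with hM
    set T := (Finset.range B).filter (fun ℓ => ¬ P ℓ) with hT
    have hMT : M.card + T.card = B := by
      rw [hM, hT, Finset.card_filter_add_card_filter_not, Finset.card_range]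
    have hTM : T.card ≤ M.card := by
      apply Finset.card_le_card_of_injOn (fun ℓ => (ℓ + 1) % B)
      · intro ℓ hℓ
        rw [hT, Finset.mem_coe, Finset.mem_filter, Finset.mem_range] at hℓ
        obtain ⟨hℓB, hnP⟩ := hℓ
        rw [hM, Finset.mem_coe, Finset.mem_filter, Finset.mem_range]
        refine ⟨Nat.mod_lt _ (by omega), ?_⟩
        rcases key ℓ hℓB with hq | hq
        · exact absurd hq hnP
        · exact hq
      · intro a ha b hb hab
        rw [hT, Finset.coe_filter] at ha hb
        simp only [Set.mem_setOf_eq, Finset.mem_range] at ha hb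
        have haB : a < B := ha.1
        have hbB : b < B := hb.1
        simp only at hab
        rcases Nat.lt_or_ge (a + 1) B with h1 | h1 <;> rcases Nat.lt_or_ge (b + 1) B with hh2 | hh2
        · rw [Nat.mod_eq_of_lt h1, Nat.mod_eq_of_lt hh2] at hab; omega
        · rw [Nat.mod_eq_of_lt h1, show b + 1 = B by omega, Nat.mod_self] at hab; omega
        · rw [Nat.mod_eq_of_lt hh2, show a + 1 = B by omega, Nat.mod_self] at hab; omega
        · omega
    have hcard : B ≤ 2 * M.card := by omega
    rw [div_le_iff₀ (by exact_mod_cast (by omega : (0:ℕ) < k))]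
    have hnk : n ≤ M.card * k := by
      calc n = h * B := hB
        _ ≤ h * (2 * M.card) := Nat.mul_le_mul_left _ hcard
        _ = M.card * k := by rw [hk2]; ring
    exact_mod_cast hnk
  · intro ℓ hℓ
    rw [Finset.mem_filter] at hℓ
    exact hℓ.2
end

section
/- Let k ≥ 4 be an even integer and let n ≥ k be a multiple of k/2, and let π be a permutation of N = {0,…,n−1}. Then in Ψ₀^π every clause contains exactly k distinct variables, and every variable x_j appears (positively or negatively) in at most k²/2 of the clauses { W^π_{i,ℓ} ∨ Π^π_{i+k/2} : i ∈ N, ℓ ∈ Ξ_i^π }. Consequently Ψ₀^π ∈ Φ_{n,k,d} for every integer d ≥ k²/2. -/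
open Real Finset

attribute [local instance] Classical.propDecidable

section Aux

lemma countP_finRange' (n : ℕ) (p : Fin n → Bool) :
    (List.finRange n).countP p = (Finset.univ.filter (fun x => p x)).card := by
  simp [List.countP_eq_length_filter, Finset.card, Finset.filter, Finset.univ, Fintype.elems,
    Fin.fintype]

lemma countP_range' (n : ℕ) (p : ℕ → Bool) :
    (List.range n).countP p = ((Finset.range n).filter (fun x => p x)).card := by
  simp [List.countP_eq_length_filter, Finset.card, Finset.filter, Finset.range, Multiset.range]

lemma filterMap_ite {α β : Type*} (q : α → Prop) [DecidablePred q] (h : α → β) (l : List α) :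
    (l.filterMap fun a => if q a then some (h a) else none)
      = (l.filter (fun a => decide (q a))).map h := by
  induction l with
  | nil => rfl
  | cons a t ih => by_cases hq : q a <;> simp [hq, ih, List.filterMap_cons]

lemma sum_map_ite_count {α : Type*} (c : ℕ) (q : α → Prop) [DecidablePred q] (l : List α) :
    (l.map fun a => if q a then c else 0).sum = (l.countP fun a => decide (q a)) * c := by
  induction l with
  | nil => simp
  | cons a t ih => by_cases hq : q a <;> simp [hq, ih, List.countP_cons, Nat.add_mul] <;> omega

lemma countP_bor_le {α : Type*} (f g : α → Bool) (l : List α) :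
    (l.countP fun a => f a || g a) ≤ l.countP f + l.countP g := by
  induction l with
  | nil => simp
  | cons a t ih =>
    simp only [List.countP_cons]
    cases hf : f a <;> cases hg : g a <;> simp [hf, hg] <;> omega

lemma countP_or_le {α : Type*} (p q : α → Prop) [DecidablePred p] [DecidablePred q] (l : List α) :
    (l.countP fun a => decide (p a ∨ q a))
      ≤ l.countP (fun a => decide (p a)) + l.countP (fun a => decide (q a)) := by
  have he : (fun a => decide (p a ∨ q a)) = fun a => decide (p a) || decide (q a) := by
    funext a; by_cases hp : p a <;> by_cases hq : q a <;> simp [hp, hq]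
  rw [he]
  exact countP_bor_le _ _ l

lemma mod_inj' {n a b i : ℕ} (ha : a < n) (hb : b < n) (h : (i + a) % n = (i + b) % n) :
    a = b := by
  have h2 : a % n = b % n := (Nat.ModEq.add_left_cancel' i h)
  rwa [Nat.mod_eq_of_lt ha, Nat.mod_eq_of_lt hb] at h2

end Aux

section Main

lemma Xi_card (k n : ℕ) (pp : Equiv.Perm (Fin n)) (hn : 0 < n) (hh : k / 2 ≤ n) (i : ℕ) :
    (Finset.univ.filter (fun m => inXi n k pp i m)).card = k / 2 := by
  have himg : (Finset.univ.filter (fun m => inXi n k pp i m))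
      = (Finset.range (k / 2)).image (fun j => pp ⟨(i + j) % n, Nat.mod_lt _ hn⟩) := by
    ext m
    simp only [Finset.mem_filter, Finset.mem_image, Finset.mem_range, Finset.mem_univ, true_and]
    simp only [inXi]
    constructor
    · rintro ⟨j, hj, hval⟩
      refine ⟨j, hj, ?_⟩
      have hval2 : pp.symm m = ⟨(i + j) % n, Nat.mod_lt _ hn⟩ := Fin.ext hval
      rw [← hval2]; simp
    · rintro ⟨j, hj, rfl⟩
      exact ⟨j, hj, by simp⟩
  rw [himg, Finset.card_image_of_injOn, Finset.card_range]
  intro a ha b hb hab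
  simp only [Finset.mem_coe, Finset.mem_range] at ha hb
  have hs := pp.injective hab
  have hv : (i + a) % n = (i + b) % n := congrArg Fin.val hs
  exact mod_inj' (lt_of_lt_of_le ha hh) (lt_of_lt_of_le hb hh) hv

lemma Xi_disj (k n : ℕ) (pp : Equiv.Perm (Fin n)) (hkn : k ≤ n) (i : ℕ) (m : Fin n)
    (h1 : inXi n k pp i m) (h2 : inXi n k pp (i + k / 2) m) : False := by
  obtain ⟨a, ha, hva⟩ := h1
  obtain ⟨b, hb, hvb⟩ := h2
  have hv : (i + a) % n = (i + (k / 2 + b)) % n := by rw [← Nat.add_assoc, ← hva, ← hvb]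
  have := mod_inj' (n := n) (by omega) (by omega) hv
  omega

lemma gClause_isSome (k n : ℕ) (pp : Equiv.Perm (Fin n)) (i : ℕ) (ℓ : Fin n)
    (hℓ : inXi n k pp i ℓ) (m : Fin n) :
    (gClause n k pp i ℓ m).isSome = true ↔ (inXi n k pp i m ∨ inXi n k pp (i + k / 2) m) := by
  unfold gClause
  by_cases hm : m = ℓ
  · subst hm; simp [hℓ]
  · by_cases hc : inXi n k pp i m ∨ inXi n k pp (i + k / 2) m <;> simp [hm, hc]

lemma mem_Psi0 (k n : ℕ) (pp : Equiv.Perm (Fin n)) (c : Clause n) :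
    c ∈ Psi0 n k pp ↔ ∃ i < n, ∃ ℓ : Fin n, inXi n k pp i ℓ ∧ gClause n k pp i ℓ = c := by
  simp only [Psi0, List.mem_flatMap, List.mem_range, List.mem_filterMap, List.mem_finRange,
    true_and, Option.ite_none_right_eq_some, Option.some.injEq]

lemma clauseVars_card (k n : ℕ) (pp : Equiv.Perm (Fin n)) (hn : 0 < n) (hkn : k ≤ n)
    (hke : Even k) (i : ℕ) (ℓ : Fin n) (hℓ : inXi n k pp i ℓ) :
    (clauseVars (gClause n k pp i ℓ)).card = k := by
  have hh : k / 2 ≤ n := le_trans (Nat.div_le_self _ _) hkn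
  have hset : clauseVars (gClause n k pp i ℓ)
      = Finset.univ.filter (fun m => inXi n k pp i m)
        ∪ Finset.univ.filter (fun m => inXi n k pp (i + k / 2) m) := by
    ext m
    simp only [clauseVars, Finset.mem_filter, Finset.mem_union, Finset.mem_univ, true_and]
    exact gClause_isSome k n pp i ℓ hℓ m
  have hdisj : Disjoint (Finset.univ.filter (fun m => inXi n k pp i m))
      (Finset.univ.filter (fun m => inXi n k pp (i + k / 2) m)) := by
    rw [Finset.disjoint_left]
    intro m h1 h2
    simp only [Finset.mem_filter, Finset.mem_univ, true_and] at h1 h2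
    exact Xi_disj k n pp hkn i m h1 h2
  rw [hset, Finset.card_union_of_disjoint hdisj, Xi_card k n pp hn hh, Xi_card k n pp hn hh]
  obtain ⟨r, hr⟩ := hke
  omega

lemma count_shift_le (k n : ℕ) (pp : Equiv.Perm (Fin n)) (j : Fin n) (o : ℕ)
    (ho : o + k / 2 ≤ 2 * n) :
    ((Finset.range n).filter (fun i => inXi n k pp (i + o) j)).card ≤ k / 2 := by
  have hsub : (Finset.range n).filter (fun i => inXi n k pp (i + o) j)
      ⊆ (Finset.range (k / 2)).image
          (fun j' => (((pp.symm j : Fin n) : ℕ) + 2 * n - (o + j')) % n) := by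
    intro i hi
    simp only [Finset.mem_filter, Finset.mem_range] at hi
    simp only [inXi] at hi
    obtain ⟨hin, j', hj', hval⟩ := hi
    simp only [Finset.mem_image, Finset.mem_range]
    refine ⟨j', hj', ?_⟩
    rw [hval]
    have h1 : (i + o + j') % n + 2 * n - (o + j') = (i + o + j') % n + (2 * n - (o + j')) := by
      omega
    have h3 : i + o + j' + (2 * n - (o + j')) = i + 2 * n := by omega
    rw [h1, Nat.mod_add_mod, h3, Nat.add_mul_mod_self_right, Nat.mod_eq_of_lt hin]
  exact le_trans (Finset.card_le_card hsub) (le_trans Finset.card_image_le (by simp))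

lemma degree_Psi0_le (k n : ℕ) (pp : Equiv.Perm (Fin n)) (hn : 0 < n) (hke : Even k)
    (hkn : k ≤ n) (j : Fin n) :
    degree (Psi0 n k pp) j ≤ k ^ 2 / 2 := by
  have hh : k / 2 ≤ n := le_trans (Nat.div_le_self _ _) hkn
  unfold degree Psi0
  rw [← List.countP_eq_length_filter, List.countP_flatMap]
  set p : Clause n → Bool := fun c => (c j).isSome with hp
  set cond : ℕ → Prop := fun i => inXi n k pp i j ∨ inXi n k pp (i + k / 2) j with hcond
  have hterm : ∀ i ∈ List.range n,
      (List.countP p ∘ fun i => (List.finRange n).filterMap fun ℓ =>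
        if inXi n k pp i ℓ then some (gClause n k pp i ℓ) else none) i
        ≤ (fun i => if cond i then k / 2 else 0) i := by
    intro i _
    simp only [Function.comp_apply]
    rw [filterMap_ite, List.countP_map, List.countP_filter]
    by_cases hc : cond i
    · rw [if_pos hc]
      have hmono : List.countP (fun ℓ => (p ∘ gClause n k pp i) ℓ && decide (inXi n k pp i ℓ))
          (List.finRange n) ≤ List.countP (fun ℓ => decide (inXi n k pp i ℓ))
          (List.finRange n) := by
        apply List.countP_mono_left
        intro ℓ _ hl
        simp only [Bool.and_eq_true] at hl
        exact hl.2
      refine le_trans hmono ?_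
      rw [countP_finRange']
      have heq : (Finset.univ.filter fun x => decide (inXi n k pp i x))
          = Finset.univ.filter (fun m => inXi n k pp i m) := by
        apply Finset.filter_congr
        intro x _
        simp
      rw [heq, Xi_card k n pp hn hh]
    · rw [if_neg hc]
      rw [Nat.le_zero, List.countP_eq_zero]
      intro ℓ _ hl
      simp only [Bool.and_eq_true, Function.comp_apply, decide_eq_true_eq] at hl
      obtain ⟨hps, hxi⟩ := hl
      exact hc ((gClause_isSome k n pp i ℓ hxi j).mp hps)
  have hsum := List.sum_le_sum hterm
  refine le_trans hsum ?_
  rw [sum_map_ite_count]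
  have hcount : (List.countP (fun i => decide (cond i)) (List.range n)) ≤ k / 2 + k / 2 := by
    have hle := countP_or_le (fun i => inXi n k pp i j) (fun i => inXi n k pp (i + k / 2) j)
      (List.range n)
    refine le_trans hle ?_
    have hA : List.countP (fun i => decide (inXi n k pp i j)) (List.range n) ≤ k / 2 := by
      rw [countP_range']
      have heq : ((Finset.range n).filter fun x => decide (inXi n k pp x j))
          = (Finset.range n).filter (fun i => inXi n k pp (i + 0) j) := by
        apply Finset.filter_congr
        intro x _
        simp
      rw [heq]
      exact count_shift_le k n pp j 0 (by omega)
    have hB : List.countP (fun i => decide (inXi n k pp (i + k / 2) j)) (List.range n)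
        ≤ k / 2 := by
      rw [countP_range']
      have heq : ((Finset.range n).filter fun x => decide (inXi n k pp (x + k / 2) j))
          = (Finset.range n).filter (fun i => inXi n k pp (i + k / 2) j) := by
        apply Finset.filter_congr
        intro x _
        simp
      rw [heq]
      exact count_shift_le k n pp j (k / 2) (by omega)
    omega
  have hfin : (k / 2 + k / 2) * (k / 2) ≤ k ^ 2 / 2 := by
    obtain ⟨r, hr⟩ := hke
    subst hr
    have h2 : (r + r) / 2 = r := by omega
    have h3 : (r + r) ^ 2 = r * r * 4 := by ring
    have h4 : (r + r) * r = r * r * 2 := by ring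
    rw [h2, h3, h4]
    generalize r * r = s
    omega
  calc List.countP (fun i => decide (cond i)) (List.range n) * (k / 2)
      ≤ (k / 2 + k / 2) * (k / 2) := Nat.mul_le_mul_right _ hcount
    _ ≤ k ^ 2 / 2 := hfin

end Main

/-- every clause of `Ψ₀^π` has exactly `k` distinct variables, every variable
appears in at most `k²/2` of its clauses, and hence `Ψ₀^π ∈ Φ_{n,k,d}` for every `d ≥ k²/2`. -/
theorem stmt8 (k n : ℕ) (hk4 : 4 ≤ k) (hke : Even k) (hkn : k ≤ n) (hdvd : k / 2 ∣ n)
    (pp : Equiv.Perm (Fin n)) :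
    (∀ c ∈ Psi0 n k pp, (clauseVars c).card = k) ∧
    (∀ j : Fin n, degree (Psi0 n k pp) j ≤ k ^ 2 / 2) ∧
    (∀ d : ℕ, k ^ 2 / 2 ≤ d → memPhi n k d (Psi0 n k pp)) := by
  have hn : 0 < n := lt_of_lt_of_le (by omega) hkn
  have hclause : ∀ c ∈ Psi0 n k pp, (clauseVars c).card = k := by
    intro c hc
    rw [mem_Psi0] at hc
    obtain ⟨i, hi, ℓ, hℓ, rfl⟩ := hc
    exact clauseVars_card k n pp hn hkn hke i ℓ hℓ
  have hdeg : ∀ j : Fin n, degree (Psi0 n k pp) j ≤ k ^ 2 / 2 :=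
    fun j => degree_Psi0_le k n pp hn hke hkn j
  exact ⟨hclause, hdeg, fun d hd => ⟨hclause, fun j => le_trans (hdeg j) hd⟩⟩
end

section
/- The function f : (0,1) → ℝ defined by f(α) = −(α/(1−α))·ln α − ln(1−α) is strictly increasing on (0,1), tends to 0 as α → 0⁺ and to +∞ as α → 1⁻; consequently f is a bijection from (0,1) onto (0,∞). -/
/-- The function `f(α) = −(α/(1−α))·ln α − ln(1−α)`. -/
noncomputable def fGap (α : ℝ) : ℝ := -(α / (1 - α)) * Real.log α - Real.log (1 - α)

lemma fGap_eq : fGap = fun α : ℝ => -(α * Real.log α) / (1 - α) - Real.log (1 - α) := by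
  funext α
  simp [fGap, div_mul_eq_mul_div, neg_div]

lemma hasDerivAt_fGap {α : ℝ} (h0 : 0 < α) (h1 : α < 1) :
    HasDerivAt fGap (-Real.log α / (1 - α) ^ 2) α := by
  have hne : (1 : ℝ) - α ≠ 0 := by linarith
  have hg : HasDerivAt (fun x : ℝ => x / (1 - x)) ((1 * (1 - α) - α * (0 - 1)) / (1 - α) ^ 2) α :=
    (hasDerivAt_id α).div ((hasDerivAt_const α 1).sub (hasDerivAt_id α)) hne
  have hlog : HasDerivAt Real.log α⁻¹ α := Real.hasDerivAt_log (ne_of_gt h0)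
  have hlog1 : HasDerivAt (fun x : ℝ => Real.log (1 - x)) ((1 - α)⁻¹ * (0 - 1)) α :=
    (Real.hasDerivAt_log hne).comp α ((hasDerivAt_const α 1).sub (hasDerivAt_id α))
  have h := ((hg.neg.mul hlog).sub hlog1)
  have hα : α ≠ 0 := ne_of_gt h0
  convert h using 1
  · rfl
  · rfl
  · rfl
  · simp only [Pi.neg_apply]
    field_simp
    ring
lemma continuousOn_fGap : ContinuousOn fGap (Set.Ioo (0:ℝ) 1) := fun x hx =>
  ((hasDerivAt_fGap hx.1 hx.2).differentiableAt.continuousAt).continuousWithinAt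

lemma strictMonoOn_fGap : StrictMonoOn fGap (Set.Ioo (0:ℝ) 1) := by
  apply strictMonoOn_of_deriv_pos (convex_Ioo 0 1) continuousOn_fGap
  intro x hx
  rw [interior_Ioo] at hx
  rw [(hasDerivAt_fGap hx.1 hx.2).deriv]
  have hlog : Real.log x < 0 := Real.log_neg hx.1 hx.2
  have h2 : (0:ℝ) < (1 - x) ^ 2 := by nlinarith [hx.2]
  exact div_pos (by linarith) h2

lemma fGap_pos {α : ℝ} (h0 : 0 < α) (h1 : α < 1) : 0 < fGap α := by
  have hlog : Real.log α < 0 := Real.log_neg h0 h1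
  have hlog1 : Real.log (1 - α) < 0 := Real.log_neg (by linarith) (by linarith)
  have h : 0 < α / (1 - α) := div_pos h0 (by linarith)
  have : 0 < -(α / (1 - α)) * Real.log α := by
    rw [neg_mul, neg_pos]
    exact mul_neg_of_pos_of_neg h hlog
  unfold fGap; linarith

lemma tendsto_fGap_zero :
    Filter.Tendsto fGap (nhdsWithin 0 (Set.Ioi (0 : ℝ))) (nhds 0) := by
  rw [fGap_eq]
  have hc : ContinuousAt (fun α : ℝ => -(α * Real.log α) / (1 - α) - Real.log (1 - α)) 0 := by
    apply ContinuousAt.sub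
    · exact (Real.continuous_mul_log.neg.continuousAt).div
        (by fun_prop) (by norm_num)
    · exact (Real.continuousAt_log (by norm_num)).comp (by fun_prop)
  have := hc.tendsto.mono_left (nhdsWithin_le_nhds (s := Set.Ioi (0:ℝ)))
  simpa using this

lemma tendsto_fGap_one :
    Filter.Tendsto fGap (nhdsWithin 1 (Set.Iio (1 : ℝ))) Filter.atTop := by
  have hsub : Filter.Tendsto (fun α : ℝ => 1 - α) (nhdsWithin 1 (Set.Iio (1:ℝ)))
      (nhdsWithin 0 (Set.Ioi (0:ℝ))) := by
    apply tendsto_nhdsWithin_iff.mpr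
    constructor
    · have : Filter.Tendsto (fun α : ℝ => 1 - α) (nhds (1:ℝ)) (nhds (1 - 1)) :=
        (continuous_const.sub continuous_id).tendsto (1:ℝ)
      simpa using this.mono_left nhdsWithin_le_nhds
    · filter_upwards [self_mem_nhdsWithin] with x hx
      simp only [Set.mem_Iio] at hx
      simpa using hx
  have hlog : Filter.Tendsto (fun α : ℝ => -Real.log (1 - α))
      (nhdsWithin 1 (Set.Iio (1:ℝ))) Filter.atTop :=
    Filter.tendsto_neg_atBot_atTop.comp (Real.tendsto_log_nhdsGT_zero.comp hsub)
  apply Filter.tendsto_atTop_mono' _ _ hlog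
  have hmem : Set.Ioo (0:ℝ) 1 ∈ nhdsWithin 1 (Set.Iio (1:ℝ)) := by
    apply mem_nhdsWithin.2
    exact ⟨Set.Ioi 0, isOpen_Ioi, by norm_num, fun x hx => ⟨hx.1, hx.2⟩⟩
  filter_upwards [hmem] with x hx
  have hlogx : Real.log x ≤ 0 := Real.log_nonpos (le_of_lt hx.1) (le_of_lt hx.2)
  have h : 0 ≤ -(x / (1 - x)) * Real.log x := by
    rw [neg_mul, neg_nonneg]
    exact mul_nonpos_of_nonneg_of_nonpos (le_of_lt (div_pos hx.1 (by linarith [hx.2]))) hlogx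
  unfold fGap; linarith

/-- `f` is strictly increasing on `(0,1)`, tends to `0` as `α → 0⁺`, tends to
`+∞` as `α → 1⁻`, and is a bijection from `(0,1)` onto `(0,∞)`. -/
theorem stmt13 :
    StrictMonoOn fGap (Set.Ioo (0 : ℝ) 1) ∧
    Filter.Tendsto fGap (nhdsWithin 0 (Set.Ioi (0 : ℝ))) (nhds 0) ∧
    Filter.Tendsto fGap (nhdsWithin 1 (Set.Iio (1 : ℝ))) Filter.atTop ∧
    Set.BijOn fGap (Set.Ioo (0 : ℝ) 1) (Set.Ioi (0 : ℝ)) := by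
  refine ⟨strictMonoOn_fGap, tendsto_fGap_zero, tendsto_fGap_one, ?_, ?_, ?_⟩
  · exact fun x hx => fGap_pos hx.1 hx.2
  · exact strictMonoOn_fGap.injOn
  · -- surjectivity
    intro y hy
    simp only [Set.mem_Ioi] at hy
    have hmem0 : Set.Ioo (0:ℝ) 1 ∈ nhdsWithin 0 (Set.Ioi (0:ℝ)) := by
      apply mem_nhdsWithin.2
      exact ⟨Set.Iio 1, isOpen_Iio, by norm_num, fun x hx => ⟨hx.2, hx.1⟩⟩
    have hmem1 : Set.Ioo (0:ℝ) 1 ∈ nhdsWithin 1 (Set.Iio (1:ℝ)) := by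
      apply mem_nhdsWithin.2
      exact ⟨Set.Ioi 0, isOpen_Ioi, by norm_num, fun x hx => ⟨hx.1, hx.2⟩⟩
    obtain ⟨a, haIoo, hay⟩ : ∃ a, a ∈ Set.Ioo (0:ℝ) 1 ∧ fGap a < y :=
      ((Filter.eventually_of_mem hmem0 (fun x hx => hx)).and
        (tendsto_fGap_zero.eventually_lt_const hy)).exists
    obtain ⟨b, hbIoo, hby⟩ : ∃ b, b ∈ Set.Ioo (0:ℝ) 1 ∧ y < fGap b :=
      ((Filter.eventually_of_mem hmem1 (fun x hx => hx)).and
        (tendsto_fGap_one.eventually_gt_atTop y)).exists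
    have hab : a < b := by
      by_contra h
      push_neg at h
      rcases lt_or_eq_of_le h with h | h
      · exact absurd (strictMonoOn_fGap hbIoo haIoo h) (by linarith)
      · rw [h] at hby; linarith
    have hsub : Set.Icc a b ⊆ Set.Ioo (0:ℝ) 1 :=
      fun x hx => ⟨lt_of_lt_of_le haIoo.1 hx.1, lt_of_le_of_lt hx.2 hbIoo.2⟩
    have := intermediate_value_Icc (le_of_lt hab) (continuousOn_fGap.mono hsub)
    obtain ⟨c, hc, hcy⟩ := this ⟨le_of_lt hay, le_of_lt hby⟩
    exact ⟨c, hsub hc, hcy⟩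
end

section
/- Let k ≥ 4 be an even integer and let b > 1. There exists n₀ (depending on k and b) such that for every multiple n ≥ n₀ of k/2, every index i ∈ {0,…,n−1}, and every nonempty set S ⊆ {0,…,n−1} with |S| < n/b, the following holds: if π is a uniformly random permutation of {0,…,n−1}, then the probability that π({ i+j mod n : 0 ≤ j ≤ k/2 − 1 }) ∩ S = ∅ is at least (3/4)·(1 − 1/b)^{k/2}. -/
attribute [local instance] Classical.propDecidable

lemma subtypeCongr_left {α} {p q : α → Prop} [DecidablePred p] [DecidablePred q]
    (e : {x // p x} ≃ {x // q x}) (f : {x // ¬p x} ≃ {x // ¬q x}) (a : α) (h : p a) :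
    Equiv.subtypeCongr e f a = e ⟨a, h⟩ := by
  simp [Equiv.subtypeCongr, h]

lemma subtypeCongr_right {α} {p q : α → Prop} [DecidablePred p] [DecidablePred q]
    (e : {x // p x} ≃ {x // q x}) (f : {x // ¬p x} ≃ {x // ¬q x}) (a : α) (h : ¬ p a) :
    Equiv.subtypeCongr e f a = f ⟨a, h⟩ := by
  simp [Equiv.subtypeCongr, h]


lemma count_lower (n t : ℕ) (W S : Finset (Fin n)) (hW : W.card = t) :
    (n - S.card).descFactorial t * (n - t).factorial ≤
    (Finset.univ.filter (fun π : Equiv.Perm (Fin n) => ∀ m ∈ W, π m ∉ S)).card := by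
  classical
  have hcW : Fintype.card {x : Fin n // x ∈ W} = t := by simpa using hW
  have hcWc : Fintype.card {x : Fin n // x ∉ W} = n - t := by
    rw [Fintype.card_subtype_compl, hcW, Fintype.card_fin]
  have hcSc : Fintype.card {x : Fin n // x ∉ S} = n - S.card := by
    rw [Fintype.card_subtype_compl, Fintype.card_fin]
    congr 1
    simpa using rfl
  have hcard : Fintype.card (({x : Fin n // x ∈ W} ↪ {x : Fin n // x ∉ S}) ×
      Equiv.Perm {x : Fin n // x ∉ W}) = (n - S.card).descFactorial t * (n - t).factorial := by
    rw [Fintype.card_prod, Fintype.card_embedding_eq, Fintype.card_perm, hcW, hcWc, hcSc]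
  -- for each embedding, cardinalities of complements agree
  have hinj : ∀ f : {x : Fin n // x ∈ W} ↪ {x : Fin n // x ∉ S},
      Function.Injective (fun w : {x : Fin n // x ∈ W} => ((f w : Fin n))) := by
    intro f a b hab
    exact f.injective (Subtype.ext hab)
  have key : ∀ f : {x : Fin n // x ∈ W} ↪ {x : Fin n // x ∉ S},
      Fintype.card {x : Fin n // ¬ x ∈ W} =
      Fintype.card {x : Fin n // ¬ x ∈ Set.range (fun w => ((f w : Fin n)))} := by
    intro f
    rw [Fintype.card_subtype_compl, Fintype.card_subtype_compl, hcW,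
      Set.card_range_of_injective (hinj f), hcW]
  -- the map
  let Φ : (({x : Fin n // x ∈ W} ↪ {x : Fin n // x ∉ S}) ×
      Equiv.Perm {x : Fin n // x ∉ W}) → Equiv.Perm (Fin n) :=
    fun fg => Equiv.subtypeCongr (Equiv.ofInjective _ (hinj fg.1))
      (fg.2.trans (Fintype.equivOfCardEq (key fg.1)))
  have hΦ_left : ∀ fg, ∀ (m : Fin n) (hm : m ∈ W), Φ fg m = (fg.1 ⟨m, hm⟩ : Fin n) := by
    intro fg m hm
    rw [show Φ fg m = _ from subtypeCongr_left _ _ m hm]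
    simp
  have hΦ_right : ∀ fg, ∀ (m : Fin n) (hm : ¬ m ∈ W),
      Φ fg m = ((Fintype.equivOfCardEq (key fg.1)) (fg.2 ⟨m, hm⟩) : Fin n) := by
    intro fg m hm
    rw [show Φ fg m = _ from subtypeCongr_right _ _ m hm]
    simp
  have hmaps : ∀ fg, Φ fg ∈ Finset.univ.filter
      (fun π : Equiv.Perm (Fin n) => ∀ m ∈ W, π m ∉ S) := by
    intro fg
    rw [Finset.mem_filter]
    refine ⟨Finset.mem_univ _, fun m hm => ?_⟩
    rw [hΦ_left fg m hm]
    exact (fg.1 ⟨m, hm⟩).2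
  have hΦinj : Function.Injective Φ := by
    intro fg₁ fg₂ h
    obtain ⟨f₁, g₁⟩ := fg₁
    obtain ⟨f₂, g₂⟩ := fg₂
    have hf : f₁ = f₂ := by
      ext w
      have h1 := hΦ_left (f₁, g₁) w w.2
      have h2 := hΦ_left (f₂, g₂) w w.2
      simp only at h1 h2
      rw [← Subtype.coe_eta w w.2, ← h1, ← h2, h]
    subst hf
    have hg : g₁ = g₂ := by
      apply Equiv.ext; intro x
      have h1 := hΦ_right (f₁, g₁) x x.2
      have h2 := hΦ_right (f₁, g₂) x x.2
      simp only at h1 h2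
      have : ((Fintype.equivOfCardEq (key f₁)) (g₁ ⟨(x : Fin n), x.2⟩) : Fin n) =
          ((Fintype.equivOfCardEq (key f₁)) (g₂ ⟨(x : Fin n), x.2⟩) : Fin n) := by
        rw [← h1, ← h2, h]
      have := (Fintype.equivOfCardEq (key f₁)).injective (Subtype.ext this)
      simpa [Subtype.coe_eta] using this
    subst hg
    rfl
  calc (n - S.card).descFactorial t * (n - t).factorial
      = (Finset.univ : Finset (({x : Fin n // x ∈ W} ↪ {x : Fin n // x ∉ S}) ×
        Equiv.Perm {x : Fin n // x ∉ W})).card := by rw [Finset.card_univ, hcard]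
    _ ≤ _ := Finset.card_le_card_of_injOn Φ (fun a _ => hmaps a) (hΦinj.injOn)

lemma descF_cast (n s t : ℕ) (hts : t + s ≤ n) :
    (((n - s).descFactorial t : ℕ) : ℝ) = ∏ j ∈ Finset.range t, ((n : ℝ) - s - j) := by
  rw [Nat.descFactorial_eq_prod_range, Nat.cast_prod]
  apply Finset.prod_congr rfl
  intro j hj
  have hj' : j < t := Finset.mem_range.mp hj
  have h1 : s + j ≤ n := by omega
  rw [Nat.sub_sub, Nat.cast_sub h1, Nat.cast_add]
  ring

lemma descF_ratio (n s t : ℕ) (r : ℝ) (hr1 : r ≤ 1) (hts : t + s ≤ n)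
    (hs : ∀ j < t, (s : ℝ) ≤ r * ((n : ℝ) - j)) :
    (1 - r) ^ t * ((n.descFactorial t : ℕ) : ℝ) ≤ (((n - s).descFactorial t : ℕ) : ℝ) := by
  have e1 := descF_cast n s t hts
  have e2 := descF_cast n 0 t (by omega)
  simp only [Nat.sub_zero, Nat.cast_zero, sub_zero] at e2
  rw [e1, e2, show (1 - r) ^ t = ∏ _j ∈ Finset.range t, (1 - r) by
      rw [Finset.prod_const, Finset.card_range], ← Finset.prod_mul_distrib]
  apply Finset.prod_le_prod
  · intro j hj
    have hj' : j < t := Finset.mem_range.mp hj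
    have hnj : (j : ℝ) ≤ (n : ℝ) := by exact_mod_cast (by omega : j ≤ n)
    have := hs j hj'
    nlinarith [this]
  · intro j hj
    have hj' : j < t := Finset.mem_range.mp hj
    have := hs j hj'
    nlinarith [this]

lemma window_card (n t i : ℕ) (hn : 0 < n) (htn : t ≤ n) :
    ((Finset.range t).image (fun j => (⟨(i + j) % n, Nat.mod_lt _ hn⟩ : Fin n))).card = t := by
  rw [Finset.card_image_of_injOn, Finset.card_range]
  intro j₁ h₁ j₂ h₂ h
  simp only [Finset.coe_range, Set.mem_Iio] at h₁ h₂
  have h' : (i + j₁) % n = (i + j₂) % n := by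
    simpa [Fin.mk.injEq] using h
  have := Nat.ModEq.add_left_cancel' i (h' : Nat.ModEq n (i + j₁) (i + j₂))
  have : j₁ % n = j₂ % n := this
  rwa [Nat.mod_eq_of_lt (lt_of_lt_of_le h₁ htn), Nat.mod_eq_of_lt (lt_of_lt_of_le h₂ htn)] at this

set_option maxHeartbeats 2000000 in
/-- for even `k ≥ 4` and `b > 1`, for all sufficiently large multiples `n` of
`k/2`, every index `i < n` and every nonempty `S ⊆ {0,…,n−1}` with `|S| < n/b`, a uniformly
random permutation `π` of `{0,…,n−1}` maps the window `{(i+j) mod n : 0 ≤ j ≤ k/2 − 1}`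
disjointly from `S` with probability at least `(3/4)·(1 − 1/b)^{k/2}`. -/
theorem stmt19 (k : ℕ) (hk4 : 4 ≤ k) (hke : Even k) (b : ℝ) (hb : 1 < b) :
    ∃ n₀ : ℕ, ∀ n : ℕ, n₀ ≤ n → k / 2 ∣ n →
      ∀ i : ℕ, i < n → ∀ S : Finset (Fin n), S.Nonempty → (S.card : ℝ) < (n : ℝ) / b →
        (3 / 4 : ℝ) * (1 - 1 / b) ^ (k / 2) ≤
          ((Finset.univ.filter (fun pp : Equiv.Perm (Fin n) =>
              ∀ j < k / 2, ∀ m : Fin n, (m : ℕ) = (i + j) % n → pp m ∉ S)).card : ℝ) /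
            (Nat.factorial n : ℝ) := by
  classical
  set t := k / 2 with ht
  have ht2 : 2 ≤ t := by omega
  have htR : (2 : ℝ) ≤ (t : ℝ) := by exact_mod_cast ht2
  have htpos : (0 : ℝ) < t := by linarith
  have hb0 : (0 : ℝ) < b := by linarith
  obtain ⟨c, hc⟩ : ∃ c : ℝ, c = 1 - 1 / b := ⟨_, rfl⟩
  have hc0 : 0 < c := by
    rw [hc, sub_pos, div_lt_one hb0]; exact hb
  obtain ⟨δ, hδ⟩ : ∃ δ : ℝ, δ = c / (4 * (t : ℝ)) := ⟨_, rfl⟩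
  have hδ0 : 0 < δ := by rw [hδ]; positivity
  obtain ⟨r, hr⟩ : ∃ r : ℝ, r = 1 / b + δ := ⟨_, rfl⟩
  have hr0 : 0 < r := by rw [hr]; positivity
  have hkey : 1 - r = c * (1 - 1 / (4 * t)) := by
    rw [hr, hδ, hc]
    field_simp
    ring
  have hrq : (3 : ℝ) / 4 ≤ 1 - 1 / (4 * (t : ℝ)) := by
    have h1 : 1 / (4 * (t : ℝ)) ≤ 1 / 8 := by
      apply div_le_div_of_nonneg_left (by norm_num) (by norm_num) (by linarith)
    linarith
  have hr1' : 0 < 1 - r := by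
    rw [hkey]; exact mul_pos hc0 (by linarith)
  have hr1 : r ≤ 1 := by linarith
  obtain ⟨A, hA⟩ : ∃ A : ℕ, A = ⌈(t : ℝ) * (1 + b * δ) / (b * δ)⌉₊ := ⟨_, rfl⟩
  obtain ⟨B, hB⟩ : ∃ B : ℕ, B = ⌈2 * (t : ℝ) * b / (b - 1)⌉₊ := ⟨_, rfl⟩
  refine ⟨A + B + t + 1, ?_⟩
  intro n hn _ i hi S _ hScard
  have hn0 : 0 < n := lt_of_le_of_lt (Nat.zero_le i) hi
  set s := S.card with hs
  -- real bounds on n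
  have hn1 : (t : ℝ) * (1 + b * δ) / (b * δ) ≤ (n : ℝ) := by
    refine le_trans (Nat.le_ceil _) ?_
    rw [← hA]
    exact_mod_cast le_trans (by omega) hn
  have hn2 : 2 * (t : ℝ) * b / (b - 1) ≤ (n : ℝ) := by
    refine le_trans (Nat.le_ceil _) ?_
    rw [← hB]
    exact_mod_cast le_trans (by omega) hn
  have hbδ : 0 < b * δ := by positivity
  have hb1 : (0:ℝ) < b - 1 := by linarith
  -- t + s ≤ n
  have hsn : (s : ℝ) ≤ (n : ℝ) / b := le_of_lt hScard
  have hnR : (0 : ℝ) < n := by exact_mod_cast hn0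
  have hn2' : 2 * (t : ℝ) * b ≤ (n : ℝ) * (b - 1) := by
    rw [div_le_iff₀ hb1] at hn2; linarith
  have hsb : (s : ℝ) * b ≤ (n : ℝ) := by
    rw [le_div_iff₀ hb0] at hsn; linarith
  have htsR : (t : ℝ) + (s : ℝ) < (n : ℝ) := by
    nlinarith [mul_pos hnR hb1]
  have hts : t + s ≤ n := by exact_mod_cast le_of_lt (by exact_mod_cast htsR : ((t + s : ℕ) : ℝ) < (n : ℝ))
  have htn : t ≤ n := by omega
  -- the key pointwise bound
  have hs' : ∀ j < t, (s : ℝ) ≤ r * ((n : ℝ) - j) := by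
    intro j hj
    have hjt : (j : ℝ) ≤ (t : ℝ) := by exact_mod_cast le_of_lt hj
    have h1 : (t : ℝ) * (1 + b * δ) ≤ (n : ℝ) * (b * δ) := by
      rw [div_le_iff₀ hbδ] at hn1; linarith
    have h2 : (n : ℝ) / b ≤ r * ((n : ℝ) - t) := by
      rw [hr, div_le_iff₀ hb0]
      have hbne : b ≠ 0 := ne_of_gt hb0
      have expand : (1 / b + δ) * ((n : ℝ) - t) * b = ((n:ℝ) - t) + b * δ * ((n:ℝ) - t) := by
        field_simp
      rw [expand]
      nlinarith
    have h3 : r * ((n : ℝ) - t) ≤ r * ((n : ℝ) - j) := by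
      apply mul_le_mul_of_nonneg_left (by linarith) (le_of_lt hr0)
    linarith
  -- the window
  set W : Finset (Fin n) :=
    (Finset.range t).image (fun j => (⟨(i + j) % n, Nat.mod_lt _ hn0⟩ : Fin n)) with hWdef
  have hWcard : W.card = t := window_card n t i hn0 htn
  -- the filters agree
  have hfilter : (Finset.univ.filter (fun pp : Equiv.Perm (Fin n) =>
        ∀ j < t, ∀ m : Fin n, (m : ℕ) = (i + j) % n → pp m ∉ S)) =
      (Finset.univ.filter (fun π : Equiv.Perm (Fin n) => ∀ m ∈ W, π m ∉ S)) := by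
    apply Finset.filter_congr
    intro π _
    constructor
    · intro h m hm
      rw [hWdef, Finset.mem_image] at hm
      obtain ⟨j, hj, rfl⟩ := hm
      exact h j (Finset.mem_range.mp hj) _ rfl
    · intro h j hj m hm
      apply h
      rw [hWdef, Finset.mem_image]
      exact ⟨j, Finset.mem_range.mpr hj, Fin.ext hm.symm⟩
  have hcount := count_lower n t W S hWcard
  -- positivity facts
  have hfac_pos : (0 : ℝ) < (n.factorial : ℝ) := by exact_mod_cast n.factorial_pos
  have hdF_pos : (0 : ℝ) < ((n.descFactorial t : ℕ) : ℝ) := by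
    have : n.descFactorial t ≠ 0 := by
      intro h0
      exact absurd (Nat.descFactorial_eq_zero_iff_lt.mp h0) (by omega)
    exact_mod_cast Nat.pos_of_ne_zero this
  have hfeq : ((n - t).factorial : ℕ) * n.descFactorial t = n.factorial :=
    Nat.factorial_mul_descFactorial htn
  -- Bernoulli
  have h4t : (0 : ℝ) < 4 * (t : ℝ) := by linarith
  have hber : (3 : ℝ) / 4 ≤ (1 - 1 / (4 * (t : ℝ))) ^ t := by
    have h := one_add_mul_le_pow (a := -(1 / (4 * (t : ℝ)))) (by nlinarith) t
    have he : 1 + (t : ℝ) * -(1 / (4 * (t : ℝ))) = 3 / 4 := by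
      field_simp
      ring
    rw [he] at h
    simpa [sub_eq_add_neg] using h
  -- step a : (3/4) * c^t ≤ (1-r)^t
  have hstepa : (3 / 4 : ℝ) * c ^ t ≤ (1 - r) ^ t := by
    rw [hkey, mul_pow]
    calc (3 / 4 : ℝ) * c ^ t ≤ (1 - 1 / (4 * (t : ℝ))) ^ t * c ^ t := by
          apply mul_le_mul_of_nonneg_right hber (by positivity)
      _ = c ^ t * (1 - 1 / (4 * (t : ℝ))) ^ t := by ring
  -- step b : (1-r)^t ≤ dF(n-s)/dF(n)
  have hstepb : (1 - r) ^ t ≤ (((n - s).descFactorial t : ℕ) : ℝ) / ((n.descFactorial t : ℕ) : ℝ) := by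
    rw [le_div_iff₀ hdF_pos]
    exact descF_ratio n s t r hr1 hts hs'
  -- step c : dF(n-s)/dF(n) = (dF(n-s) * (n-t)!) / n!
  have hstepc : (((n - s).descFactorial t : ℕ) : ℝ) / ((n.descFactorial t : ℕ) : ℝ) =
      ((((n - s).descFactorial t * (n - t).factorial : ℕ)) : ℝ) / (n.factorial : ℝ) := by
    rw [← hfeq]
    push_cast
    have h1 : ((n - t).factorial : ℝ) ≠ 0 := by
      exact_mod_cast (n - t).factorial_ne_zero
    field_simp
  -- step d : monotonicity in the numerator
  have hstepd : ((((n - s).descFactorial t * (n - t).factorial : ℕ)) : ℝ) / (n.factorial : ℝ) ≤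
      ((Finset.univ.filter (fun pp : Equiv.Perm (Fin n) =>
          ∀ j < t, ∀ m : Fin n, (m : ℕ) = (i + j) % n → pp m ∉ S)).card : ℝ) /
        (n.factorial : ℝ) := by
    gcongr
    rw [hfilter]
    exact_mod_cast hcount
  calc (3 / 4 : ℝ) * (1 - 1 / b) ^ t = (3 / 4 : ℝ) * c ^ t := by rw [hc]
    _ ≤ (1 - r) ^ t := hstepa
    _ ≤ _ := hstepb
    _ = _ := hstepc
    _ ≤ _ := hstepd
end
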